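/- arXiv:0802.1347 — 11 statements merged into one kernel-verified Lean document; each statement's English description precedes it below -/
import Mathlib

section
/- Let X be a real Banach space and T : X ⇉ X* a maximal monotone operator. Then there exists a function h ∈ H(T) such that J h = h, i.e., h(x,x*) = h*(x*,x) for all (x,x*) ∈ X × X* (where the canonical injection of X into X** is used to evaluate h* at (x*,x)). -/
/- Setting: `X` is a real Banach space, `StrongDual ℝ X` its topological dual.
A point-to-set operator `T : X ⇉ X*` is identified with its graph,
a subset of `X × StrongDual ℝ X`.  Extended-real-valued functions
(`ℝ ∪ {+∞}`) are modelled by `EReal`. -/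

noncomputable section

variable {X : Type*} [NormedAddCommGroup X] [NormedSpace ℝ X]

/-- The duality pairing `⟨x, x*⟩ = x*(x)` of a pair `p = (x, x*)`. -/
def pairingFn (p : X × StrongDual ℝ X) : ℝ := p.2 p.1

/-- Convexity for extended-real-valued functions. -/
def EConvexOn {E : Type*} [AddCommMonoid E] [Module ℝ E] (h : E → EReal) : Prop :=
  ∀ p q : E, ∀ a b : ℝ, 0 ≤ a → 0 ≤ b → a + b = 1 →
    h (a • p + b • q) ≤ (a : EReal) * h p + (b : EReal) * h q

/-- `T` is a monotone operator: `⟨x - y, x* - y*⟩ ≥ 0` on the graph. -/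
def MonotoneOp (T : Set (X × StrongDual ℝ X)) : Prop :=
  ∀ p ∈ T, ∀ q ∈ T, 0 ≤ (p.2 - q.2) (p.1 - q.1)

/-- `T` is maximal monotone. -/
def MaximalMonotoneOp (T : Set (X × StrongDual ℝ X)) : Prop :=
  MonotoneOp T ∧
    ∀ p : X × StrongDual ℝ X, (∀ q ∈ T, 0 ≤ (p.2 - q.2) (p.1 - q.1)) → p ∈ T

/-- The transform `J h (x, x*) = sup_{(y, y*)} ⟨x, y*⟩ + ⟨y, x*⟩ - h (y, y*)`,
i.e. `J h (x, x*) = h* (x*, x)` via the canonical injection `X ↪ X**`. -/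
def JT (h : X × StrongDual ℝ X → EReal) : X × StrongDual ℝ X → EReal :=
  fun p => ⨆ q : X × StrongDual ℝ X, (((q.2 p.1 + p.2 q.1 : ℝ) : EReal) - h q)

/-- The family `H(T)` of convex lower semicontinuous functions on `X × X*`
majorizing the duality product and coinciding with it on `T`. -/
def HT (T : Set (X × StrongDual ℝ X)) : Set (X × StrongDual ℝ X → EReal) :=
  { h | EConvexOn h ∧ LowerSemicontinuous h ∧
      (∀ p : X × StrongDual ℝ X, (pairingFn p : EReal) ≤ h p) ∧
      (∀ p ∈ T, h p = (pairingFn p : EReal)) }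

/-- The subfamily `H_a(T) = { h ∈ H(T) | h ≥ J h }`. -/
def Ha (T : Set (X × StrongDual ℝ X)) : Set (X × StrongDual ℝ X → EReal) :=
  { h | h ∈ HT T ∧ JT h ≤ h }

/-- For `h ∈ H(T)`, the family `L(h) = { g ∈ H(T) | h ≥ g ≥ J g }`. -/
def Lfam (T : Set (X × StrongDual ℝ X)) (h : X × StrongDual ℝ X → EReal) :
    Set (X × StrongDual ℝ X → EReal) :=
  { g | g ∈ HT T ∧ g ≤ h ∧ JT g ≤ g }

/-- The Fenchel–Legendre conjugate `f*(x*) = sup_x ⟨x, x*⟩ - f x`. -/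
def fconj (f : X → EReal) : StrongDual ℝ X → EReal :=
  fun x' => ⨆ x : X, (((x' x : ℝ) : EReal) - f x)

/-- The `ε`-subdifferential:
`∂_ε f (x) = { x* | f y ≥ f x + ⟨y - x, x*⟩ - ε for all y }`. -/
def epsSubdiff (f : X → EReal) (ε : ℝ) (x : X) : Set (StrongDual ℝ X) :=
  { x' | ∀ y : X, f x + ((x' (y - x) - ε : ℝ) : EReal) ≤ f y }

/-- The graph of the subdifferential `∂f = ∂_0 f`. -/
def subdiffGraph (f : X → EReal) : Set (X × StrongDual ℝ X) :=
  { p | p.2 ∈ epsSubdiff f 0 p.1 }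

/-- The `ε`-enlargement `T^ε (x) = { x* | ⟨x - y, x* - y*⟩ ≥ -ε for all (y, y*) ∈ T }`. -/
def enl (T : Set (X × StrongDual ℝ X)) (ε : ℝ) (x : X) :
    Set (StrongDual ℝ X) :=
  { x' | ∀ q ∈ T, -ε ≤ (x' - q.2) (x - q.1) }

/-- The Fitzpatrick function
`φ_T (x, x*) = sup_{(y, y*) ∈ T} ⟨x, y*⟩ + ⟨y, x*⟩ - ⟨y, y*⟩`. -/
def fitz (T : Set (X × StrongDual ℝ X)) : X × StrongDual ℝ X → EReal :=
  fun p => ⨆ q ∈ T, ((q.2 p.1 + p.2 q.1 - q.2 q.1 : ℝ) : EReal)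





namespace SvaiterAux

/-- If `(a:EReal) - v ≤ b` then `(a:EReal) - b ≤ v`. -/
lemma sub_swap (a : ℝ) (b v : EReal) (h : (a : EReal) - v ≤ b) : (a : EReal) - b ≤ v := by
  induction v using EReal.rec with
  | bot =>
    rw [EReal.coe_sub_bot] at h
    have hb : b = ⊤ := top_le_iff.mp h
    simp [hb]
  | coe r =>
    induction b using EReal.rec with
    | bot =>
      exfalso
      rw [← EReal.coe_sub] at h
      exact (EReal.coe_ne_bot _ (le_bot_iff.mp h))
    | coe s =>
      rw [← EReal.coe_sub] at h ⊢
      rw [EReal.coe_le_coe_iff] at h ⊢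
      linarith
    | top => simp
  | top => simp

lemma combo_sub (a b c₁ c₂ : ℝ) (v : EReal) (ha : 0 ≤ a) (hb : 0 ≤ b) (hab : a + b = 1) :
    ((a * c₁ + b * c₂ : ℝ) : EReal) - v ≤
      (a : EReal) * ((c₁ : EReal) - v) + (b : EReal) * ((c₂ : EReal) - v) := by
  induction v using EReal.rec with
  | bot =>
    rw [EReal.coe_sub_bot, EReal.coe_sub_bot, EReal.coe_sub_bot]
    rcases ha.lt_or_eq with ha' | ha'
    · rw [EReal.coe_mul_top_of_pos ha', EReal.top_add_of_ne_bot]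
      intro hc
      rcases hb.lt_or_eq with hb' | hb'
      · rw [EReal.coe_mul_top_of_pos hb'] at hc
        exact (by simp : (⊤:EReal) ≠ ⊥) hc
      · rw [← hb', EReal.coe_zero, zero_mul] at hc
        exact (by simp : (0:EReal) ≠ ⊥) hc
    · have hb1 : b = 1 := by linarith
      rw [← ha', hb1]
      simp
  | coe r =>
    rw [show ((c₁ : EReal) - (r:EReal)) = ((c₁ - r : ℝ) : EReal) from (EReal.coe_sub _ _).symm,
      show ((c₂ : EReal) - (r:EReal)) = ((c₂ - r : ℝ) : EReal) from (EReal.coe_sub _ _).symm,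
      ← EReal.coe_mul, ← EReal.coe_mul, ← EReal.coe_add,
      show ((a * c₁ + b * c₂ : ℝ) : EReal) - (r:EReal) = ((a * c₁ + b * c₂ - r : ℝ) : EReal) from
        (EReal.coe_sub _ _).symm, EReal.coe_le_coe_iff]
    exact le_of_eq (by linear_combination r * hab)
  | top => simp

lemma ereal_mul_le_mul_left (a : ℝ) (x y : EReal) (ha : 0 ≤ a) (h : x ≤ y) :
    (a : EReal) * x ≤ (a : EReal) * y :=
  mul_le_mul_of_nonneg_left h (by exact_mod_cast ha)

/-- Zorn's lemma for minimal elements. -/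
lemma exists_minimal {α : Type*} [PartialOrder α] (s : Set α)
    (ih : ∀ c ⊆ s, IsChain (· ≤ ·) c → ∀ y ∈ c, ∃ lb ∈ s, ∀ z ∈ c, lb ≤ z)
    (x : α) (hxs : x ∈ s) :
    ∃ m ∈ s, ∀ z ∈ s, z ≤ m → z = m := by
  obtain ⟨m, -, hm⟩ := zorn_le_nonempty₀ (α := αᵒᵈ) s
    (fun c hcs hc y hy => by
      obtain ⟨lb, hlb, h⟩ := ih c hcs hc.symm y hy
      exact ⟨lb, hlb, fun z hz => h z hz⟩) x hxs
  exact ⟨m, hm.1, fun z hzs hzm => le_antisymm hzm (hm.2 hzs hzm)⟩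

end SvaiterAux


namespace SvaiterAux

variable {X : Type*} [NormedAddCommGroup X] [NormedSpace ℝ X]

local notation "E" => X × StrongDual ℝ X

/-- The coupling function. -/
def cpl (p q : X × StrongDual ℝ X) : ℝ := q.2 p.1 + p.2 q.1

lemma cpl_symm (p q : E) : cpl p q = cpl q p := by
  simp [cpl]; ring

lemma JT_def (h : E → EReal) (p : E) :
    JT h p = ⨆ q : E, (((cpl p q : ℝ) : EReal) - h q) := rfl

lemma le_JT (h : E → EReal) (p q : E) :
    ((cpl p q : ℝ) : EReal) - h q ≤ JT h p := by
  rw [JT_def]; exact le_iSup (fun q => (((cpl p q : ℝ) : EReal) - h q)) q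

lemma JT_le (h : E → EReal) (p : E) (v : EReal)
    (hv : ∀ q : E, ((cpl p q : ℝ) : EReal) - h q ≤ v) : JT h p ≤ v := by
  rw [JT_def]; exact iSup_le hv

lemma JT_anti {h g : E → EReal} (hhg : h ≤ g) : JT g ≤ JT h := fun p =>
  JT_le g p _ (fun q => le_trans (EReal.sub_le_sub le_rfl (hhg q)) (le_JT h p q))

/-- Fenchel: `J (J h) ≤ h`. -/
lemma JT_JT_le (h : E → EReal) : JT (JT h) ≤ h := fun p => by
  refine JT_le _ p _ (fun q => ?_)
  apply sub_swap
  rw [cpl_symm] at *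
  exact le_JT h q p

lemma JT_JT_mono {h g : E → EReal} (hhg : h ≤ g) : JT (JT h) ≤ JT (JT g) :=
  JT_anti (JT_anti hhg)

lemma cpl_lin (a b : ℝ) (p₁ p₂ q : E) :
    cpl (a • p₁ + b • p₂) q = a * cpl p₁ q + b * cpl p₂ q := by
  simp only [cpl, Prod.fst_add, Prod.snd_add, Prod.smul_fst, Prod.smul_snd, map_add, map_smul,
    ContinuousLinearMap.add_apply, ContinuousLinearMap.coe_smul', Pi.smul_apply, smul_eq_mul]
  ring

/-- `J h` is convex. -/
lemma JT_convex (h : E → EReal) : EConvexOn (JT h) := by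
  intro p₁ p₂ a b ha hb hab
  refine JT_le h _ _ (fun q => ?_)
  rw [cpl_lin]
  refine le_trans (combo_sub a b (cpl p₁ q) (cpl p₂ q) (h q) ha hb hab) ?_
  exact add_le_add (ereal_mul_le_mul_left a _ _ ha (le_JT h p₁ q))
    (ereal_mul_le_mul_left b _ _ hb (le_JT h p₂ q))

/-- `J h` is lower semicontinuous. -/
lemma JT_lsc (h : E → EReal) : LowerSemicontinuous (JT h) := by
  have : ∀ p : E, JT h p = ⨆ q : E, (((cpl p q : ℝ) : EReal) - h q) := JT_def h
  have : JT h = fun p => ⨆ q : E, (((cpl p q : ℝ) : EReal) - h q) := funext this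
  rw [this]
  apply lowerSemicontinuous_iSup
  intro q
  have hc : Continuous fun p : E => cpl p q := by
    apply Continuous.add
    · exact q.2.continuous.comp continuous_fst
    · exact (ContinuousLinearMap.apply ℝ ℝ q.1).continuous.comp continuous_snd
  induction (h q) using EReal.rec with
  | bot =>
    simp only [EReal.coe_sub_bot]
    exact lowerSemicontinuous_const
  | coe r =>
    have : (fun p : E => ((cpl p q : ℝ) : EReal) - (r : EReal)) =
        fun p : E => ((cpl p q - r : ℝ) : EReal) := by
      funext p; rw [← EReal.coe_sub]
    rw [this]
    exact (continuous_coe_real_ereal.comp ((hc.sub continuous_const))).lowerSemicontinuous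
  | top =>
    simp only [EReal.sub_top]
    exact lowerSemicontinuous_const

end SvaiterAux

namespace SvaiterAux

variable {X : Type*} [NormedAddCommGroup X] [NormedSpace ℝ X]

local notation "E" => X × StrongDual ℝ X

lemma cpl_self (p : E) : cpl p p = 2 * pairingFn p := by
  simp [cpl, pairingFn]; ring

lemma pairing_combo (a b : ℝ) (p q : E) :
    pairingFn (a • p + b • q) =
      a * a * pairingFn p + a * b * cpl p q + b * b * pairingFn q := by
  simp only [pairingFn, cpl, Prod.fst_add, Prod.snd_add, Prod.smul_fst, Prod.smul_snd, map_add,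
    map_smul, ContinuousLinearMap.add_apply, ContinuousLinearMap.coe_smul', Pi.smul_apply,
    smul_eq_mul]
  ring

lemma diff_eval (p q : E) :
    (p.2 - q.2) (p.1 - q.1) = pairingFn p + pairingFn q - cpl p q := by
  simp only [pairingFn, cpl, map_sub, ContinuousLinearMap.sub_apply]
  ring

open Classical in
/-- The function `π + δ_T`. -/
def indT (T : Set (X × StrongDual ℝ X)) : X × StrongDual ℝ X → EReal :=
  fun p => if p ∈ T then ((pairingFn p : ℝ) : EReal) else ⊤

lemma indT_pos {T : Set (X × StrongDual ℝ X)} {p : E} (hp : p ∈ T) :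
    indT T p = ((pairingFn p : ℝ) : EReal) := by simp [indT, hp]

lemma indT_neg {T : Set (X × StrongDual ℝ X)} {p : E} (hp : p ∉ T) :
    indT T p = ⊤ := by simp [indT, hp]

lemma ereal_exists_real (x : EReal) (hb : x ≠ ⊥) (ht : x ≠ ⊤) : ∃ r : ℝ, x = (r : ℝ) := by
  induction x using EReal.rec with
  | bot => exact absurd rfl hb
  | coe r => exact ⟨r, rfl⟩
  | top => exact absurd rfl ht

lemma T_nonempty {T : Set (X × StrongDual ℝ X)} (hT : MaximalMonotoneOp T) :
    T.Nonempty := by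
  by_contra hc
  rw [Set.not_nonempty_iff_eq_empty] at hc
  have := hT.2 (0, 0) (fun q hq => by rw [hc] at hq; exact absurd hq (Set.notMem_empty q))
  rw [hc] at this
  exact Set.notMem_empty _ this

/-- The Fitzpatrick function `JT (indT T)` majorizes the pairing (by maximality). -/
lemma pairing_le_JT_indT {T : Set (X × StrongDual ℝ X)} (hT : MaximalMonotoneOp T)
    (p : E) : ((pairingFn p : ℝ) : EReal) ≤ JT (indT T) p := by
  by_contra hc
  push_neg at hc
  have hmem : p ∈ T := by
    apply hT.2
    intro q hq
    have h1 : ((cpl p q : ℝ) : EReal) - indT T q ≤ JT (indT T) p := le_JT _ p q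
    rw [indT_pos hq, ← EReal.coe_sub] at h1
    have h2 : ((cpl p q - pairingFn q : ℝ) : EReal) < ((pairingFn p : ℝ) : EReal) :=
      lt_of_le_of_lt h1 hc
    rw [EReal.coe_lt_coe_iff] at h2
    rw [diff_eval]
    linarith
  have h3 : ((cpl p p : ℝ) : EReal) - indT T p ≤ JT (indT T) p := le_JT _ p p
  rw [indT_pos hmem, ← EReal.coe_sub, cpl_self] at h3
  have : ((pairingFn p : ℝ) : EReal) ≤ JT (indT T) p := by
    convert h3 using 2
    ring
  exact absurd this (not_le.mpr hc)

lemma JT_indT_on_T {T : Set (X × StrongDual ℝ X)} (hT : MaximalMonotoneOp T)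
    {p : E} (hp : p ∈ T) : JT (indT T) p = ((pairingFn p : ℝ) : EReal) := by
  refine le_antisymm ?_ (pairing_le_JT_indT hT p)
  refine JT_le _ p _ (fun q => ?_)
  by_cases hq : q ∈ T
  · rw [indT_pos hq, ← EReal.coe_sub, EReal.coe_le_coe_iff]
    have h0 := hT.1 p hp q hq
    rw [diff_eval] at h0
    linarith
  · rw [indT_neg hq, EReal.sub_top]
    exact bot_le

/-- "Pre-representation": convex, above the pairing, equal to it on `T`. -/
def preH (T : Set (X × StrongDual ℝ X)) (f : X × StrongDual ℝ X → EReal) : Prop :=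
  EConvexOn f ∧ (∀ p : E, ((pairingFn p : ℝ) : EReal) ≤ f p) ∧
    (∀ p ∈ T, f p = ((pairingFn p : ℝ) : EReal))

lemma le_indT {T : Set (X × StrongDual ℝ X)} {f : E → EReal}
    (hf : ∀ p ∈ T, f p = ((pairingFn p : ℝ) : EReal)) : f ≤ indT T := by
  intro p
  by_cases hp : p ∈ T
  · rw [indT_pos hp, hf p hp]
  · rw [indT_neg hp]; exact le_top

/-- The λ-trick: for convex `f ≥ π` with `f p = π p`, one has `J f p ≤ π p`. -/
lemma JT_le_pairing {f : E → EReal} (hconv : EConvexOn f)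
    (hge : ∀ q : E, ((pairingFn q : ℝ) : EReal) ≤ f q)
    {p : E} (hp : f p = ((pairingFn p : ℝ) : EReal)) :
    JT f p ≤ ((pairingFn p : ℝ) : EReal) := by
  refine JT_le _ p _ (fun q => ?_)
  rcases eq_or_ne (f q) ⊤ with hfq | hfq
  · rw [hfq, EReal.sub_top]; exact bot_le
  · have hbot : f q ≠ ⊥ := ne_bot_of_le_ne_bot (EReal.coe_ne_bot _) (hge q)
    obtain ⟨r, hr⟩ := ereal_exists_real (f q) hbot hfq
    rw [hr, ← EReal.coe_sub, EReal.coe_le_coe_iff]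
    have hrge : pairingFn q ≤ r := by
      have := hge q; rw [hr, EReal.coe_le_coe_iff] at this; exact this
    -- the ε-argument
    have key : ∀ ε : ℝ, 0 < ε → ε < 1 →
        cpl p q - pairingFn p - r ≤ ε * (cpl p q - pairingFn p - pairingFn q) := by
      intro ε hε hε1
      have hcomb := hconv p q (1 - ε) ε (by linarith) (le_of_lt hε) (by ring)
      rw [hp, hr] at hcomb
      have hub : ((1 - ε : ℝ) : EReal) * ((pairingFn p : ℝ) : EReal) + (ε : EReal) * (r : EReal) =
          (((1 - ε) * pairingFn p + ε * r : ℝ) : EReal) := by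
        rw [← EReal.coe_mul, ← EReal.coe_mul, ← EReal.coe_add]
      rw [hub] at hcomb
      have hlb : ((pairingFn ((1 - ε) • p + ε • q) : ℝ) : EReal) ≤
          f ((1 - ε) • p + ε • q) := hge _
      have hreal : ((pairingFn ((1 - ε) • p + ε • q) : ℝ) : EReal) ≤
          (((1 - ε) * pairingFn p + ε * r : ℝ) : EReal) := le_trans hlb hcomb
      rw [EReal.coe_le_coe_iff, pairing_combo] at hreal
      have H4 : ε * (cpl p q - pairingFn p - r) ≤
          ε * (ε * (cpl p q - pairingFn p - pairingFn q)) := by nlinarith [hreal]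
      exact le_of_mul_le_mul_left H4 hε
    by_contra hgt
    push_neg at hgt
    set A := cpl p q - pairingFn p - r with hA
    set B := cpl p q - pairingFn p - pairingFn q with hB
    have hApos : 0 < A := by rw [hA]; linarith
    rcases le_or_gt B 0 with hBle | hBpos
    · have := key (1/2) (by norm_num) (by norm_num)
      nlinarith
    · have hε : (0:ℝ) < min (1/2) (A / (2 * B)) := by
        apply lt_min (by norm_num)
        positivity
      have hε1 : min (1/2) (A / (2 * B)) < 1 :=
        lt_of_le_of_lt (min_le_left _ _) (by norm_num)
      have hk := key _ hε hε1
      have : min (1/2) (A / (2 * B)) * B ≤ (A / (2 * B)) * B :=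
        mul_le_mul_of_nonneg_right (min_le_right _ _) (le_of_lt hBpos)
      have heq : (A / (2 * B)) * B = A / 2 := by field_simp
      nlinarith

/-- `J` maps pre-representations into `H(T)`. -/
lemma JT_mem_HT {T : Set (X × StrongDual ℝ X)} (hT : MaximalMonotoneOp T)
    {f : E → EReal} (hf : preH T f) : JT f ∈ HT T := by
  obtain ⟨hconv, hge, heq⟩ := hf
  have hπ : ∀ p : E, ((pairingFn p : ℝ) : EReal) ≤ JT f p := fun p =>
    le_trans (pairing_le_JT_indT hT p) (JT_anti (le_indT heq) p)
  exact ⟨JT_convex f, JT_lsc f, hπ, fun p hp =>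
    le_antisymm (JT_le_pairing hconv hge (heq p hp)) (hπ p)⟩

lemma HT_preH {T : Set (X × StrongDual ℝ X)} {f : E → EReal} (hf : f ∈ HT T) :
    preH T f := ⟨hf.1, hf.2.2.1, hf.2.2.2⟩

end SvaiterAux

namespace SvaiterAux

variable {X : Type*} [NormedAddCommGroup X] [NormedSpace ℝ X]

local notation "E" => X × StrongDual ℝ X

theorem main (T : Set (X × StrongDual ℝ X)) (hT : MaximalMonotoneOp T) :
    ∃ h ∈ HT T, JT h = h := by
  classical
  -- the Fitzpatrick function
  set phi : E → EReal := JT (indT T) with hphi_def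
  have hphiHT : phi ∈ HT T :=
    ⟨JT_convex _, JT_lsc _, pairing_le_JT_indT hT, fun p hp => JT_indT_on_T hT hp⟩
  have hphi_le_ind : phi ≤ indT T := le_indT hphiHT.2.2.2
  set sigma : E → EReal := JT phi with hsigma_def
  have hsigmaHT : sigma ∈ HT T := JT_mem_HT hT (HT_preH hphiHT)
  have hphi_le_sigma : phi ≤ sigma := JT_anti hphi_le_ind
  have hsigmaHa : sigma ∈ Ha T := ⟨hsigmaHT, le_trans (JT_JT_le phi) hphi_le_sigma⟩
  -- Zorn's lemma: the family Ha T has a minimal element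
  obtain ⟨m, hmHa, hmin⟩ : ∃ m ∈ Ha T, ∀ z ∈ Ha T, z ≤ m → z = m := by
    refine exists_minimal (Ha T) ?_ sigma hsigmaHa
    intro c hcs hchain y hy
    haveI : Nonempty c := ⟨⟨y, hy⟩⟩
    -- pairwise: J g ≤ g' for g, g' in the chain
    have hpair : ∀ g ∈ c, ∀ g' ∈ c, JT g ≤ g' := by
      intro g hg g' hg'
      rcases eq_or_ne g g' with rfl | hne
      · exact (hcs hg).2
      rcases hchain hg hg' hne with h1 | h1
      · exact le_trans (hcs hg).2 h1
      · exact le_trans (JT_anti h1) (hcs hg').2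
    set G : E → EReal := fun p => ⨆ g : c, JT (g : E → EReal) p with hG_def
    have hGle : ∀ g' ∈ c, G ≤ g' := fun g' hg' p =>
      iSup_le fun g => hpair g g.2 g' hg' p
    have hJg_le_G : ∀ g ∈ c, JT g ≤ G := by
      intro g hg p
      exact le_iSup (fun g : c => JT (g : E → EReal) p) ⟨g, hg⟩
    -- G is a pre-representation
    have hGpre : preH T G := by
      refine ⟨?_, ?_, ?_⟩
      · intro p q a b ha hb hab
        refine iSup_le fun g => ?_
        refine le_trans (JT_convex (g : E → EReal) p q a b ha hb hab) ?_
        exact add_le_add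
          (ereal_mul_le_mul_left a _ _ ha (le_iSup (fun g : c => JT (g : E → EReal) p) g))
          (ereal_mul_le_mul_left b _ _ hb (le_iSup (fun g : c => JT (g : E → EReal) q) g))
      · intro p
        exact le_trans ((JT_mem_HT hT (HT_preH (hcs hy).1)).2.2.1 p) (hJg_le_G y hy p)
      · intro p hp
        refine le_antisymm (iSup_le fun g => ?_)
          (le_trans (le_of_eq ((JT_mem_HT hT (HT_preH (hcs hy).1)).2.2.2 p hp).symm)
            (hJg_le_G y hy p))
        exact le_of_eq ((JT_mem_HT hT (HT_preH (hcs g.2).1)).2.2.2 p hp)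
    set u : E → EReal := JT G with hu_def
    have huHT : u ∈ HT T := JT_mem_HT hT hGpre
    have hG_le_u : G ≤ u := by
      intro p
      refine iSup_le fun g => ?_
      exact JT_anti (hGle g g.2) p
    have huHa : u ∈ Ha T := ⟨huHT, JT_anti hG_le_u⟩
    refine ⟨u, huHa, fun z hz => ?_⟩
    exact le_trans (JT_anti (hJg_le_G z hz)) (JT_JT_le z)
  -- the minimal element is a fixed point
  have hmHT : m ∈ HT T := hmHa.1
  set k : E → EReal := JT m with hk_def
  have hkHT : k ∈ HT T := JT_mem_HT hT (HT_preH hmHT)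
  have hk_le_m : k ≤ m := hmHa.2
  refine ⟨m, hmHT, ?_⟩
  funext p₀
  refine le_antisymm (hk_le_m p₀) ?_
  by_contra hgt
  push_neg at hgt
  have hlt : k p₀ < m p₀ := hgt
  have hktop : k p₀ ≠ ⊤ := ne_top_of_lt (lt_of_lt_of_le hlt le_top)
  have hkbot : k p₀ ≠ ⊥ := ne_bot_of_le_ne_bot (EReal.coe_ne_bot _) (hkHT.2.2.1 p₀)
  obtain ⟨κ, hκ⟩ := ereal_exists_real (k p₀) hkbot hktop
  have hκge : pairingFn p₀ ≤ κ := by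
    have := hkHT.2.2.1 p₀; rw [hκ, EReal.coe_le_coe_iff] at this; exact this
  -- the competitor v
  set v : E → EReal := fun p => if p = p₀ then ((κ : ℝ) : EReal) else m p with hv_def
  have hv_p₀ : v p₀ = ((κ : ℝ) : EReal) := by simp [hv_def]
  have hvm : v ≤ m := by
    intro p
    by_cases hp : p = p₀
    · subst hp; rw [hv_p₀, ← hκ]; exact le_of_lt hlt
    · simp [hv_def, hp]
  have hkv : k ≤ v := by
    intro p
    by_cases hp : p = p₀
    · subst hp; rw [hv_p₀, ← hκ]
    · simp only [hv_def, if_neg hp]; exact hk_le_m p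
  have hJv : JT v ≤ v := by
    intro p
    refine JT_le _ p _ (fun q => ?_)
    by_cases hq : q = p₀
    · rw [hq, hv_p₀]
      by_cases hp : p = p₀
      · rw [hp, hv_p₀, ← EReal.coe_sub, EReal.coe_le_coe_iff, cpl_self]
        linarith
      · simp only [hv_def, if_neg hp]
        apply sub_swap
        rw [cpl_symm]
        have h5 : ((cpl p₀ p : ℝ) : EReal) - m p ≤ JT m p₀ := le_JT m p₀ p
        rw [← hk_def, hκ] at h5
        exact h5
    · simp only [hv_def, if_neg hq]
      exact le_trans (le_JT m p q) (hkv p)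
  -- the strictly smaller element of Ha
  set g : E → EReal := JT (JT v) with hg_def
  have hJv_pre : preH T (JT v) := by
    refine ⟨JT_convex v, ?_, ?_⟩
    · intro p
      exact le_trans (hkHT.2.2.1 p) (JT_anti hvm p)
    · intro p hp
      refine le_antisymm ?_ (le_trans (hkHT.2.2.1 p) (JT_anti hvm p))
      have h6 : JT v p ≤ JT k p := JT_anti hkv p
      have h7 : JT k p ≤ m p := JT_JT_le m p
      rw [hmHT.2.2.2 p hp] at h7
      exact le_trans h6 h7
  have hgHT : g ∈ HT T := JT_mem_HT hT hJv_pre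
  have hgHa : g ∈ Ha T := ⟨hgHT, JT_JT_mono hJv⟩
  have hg_le_m : g ≤ m := by
    have h8 : k ≤ JT v := JT_anti hvm
    exact le_trans (JT_anti h8) (JT_JT_le m)
  have hgm : g = m := hmin g hgHa hg_le_m
  have h9 : g p₀ ≤ v p₀ := JT_JT_le v p₀
  rw [hgm, hv_p₀, ← hκ] at h9
  exact absurd h9 (not_le.mpr hlt)

end SvaiterAux

/-- any maximal monotone operator `T` on a real Banach space admits a
representation `h ∈ H(T)` which is a fixed point of `J`. -/
theorem exists_fixed_point_representation [CompleteSpace X]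
    (T : Set (X × StrongDual ℝ X)) (hT : MaximalMonotoneOp T) :
    ∃ h ∈ HT T, JT h = h := by
  exact SvaiterAux.main T hT
end
end

section
/- Let X be a real Banach space, T : X ⇉ X* a maximal monotone operator, and h ∈ H(T) with h ≥ J h. Then an element h₀ ∈ L(h) is minimal in L(h) (with respect to the pointwise order) if and only if h₀ = J h₀. -/
/- Setting: `X` is a real Banach space, `StrongDual ℝ X` its topological dual.
A point-to-set operator `T : X ⇉ X*` is identified with its graph,
a subset of `X × StrongDual ℝ X`.  Extended-real-valued functions
(`ℝ ∪ {+∞}`) are modelled by `EReal`. -/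

noncomputable section

variable {X : Type*} [NormedAddCommGroup X] [NormedSpace ℝ X]

namespace MSAux

def cc (p q : X × StrongDual ℝ X) : ℝ := q.2 p.1 + p.2 q.1

lemma cc_self (p : X × StrongDual ℝ X) : cc p p = 2 * pairingFn p := by
  simp [cc, pairingFn]; ring

lemma cc_comm (p q : X × StrongDual ℝ X) : cc p q = cc q p := add_comm _ _

lemma JT_apply (f : X × StrongDual ℝ X → EReal) (p : X × StrongDual ℝ X) :
    JT f p = ⨆ q, (((cc p q : ℝ) : EReal) - f q) := rfl

lemma le_JT (f : X × StrongDual ℝ X → EReal) (p q : X × StrongDual ℝ X) :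
    ((cc p q : ℝ) : EReal) - f q ≤ JT f p := by
  rw [JT_apply]
  exact le_iSup (fun q => (((cc p q : ℝ) : EReal) - f q)) q

lemma ereal_trich (x : EReal) : x = ⊥ ∨ x = ⊤ ∨ ∃ r : ℝ, x = r := by
  induction x
  · exact Or.inl rfl
  · exact Or.inr (Or.inr ⟨_, rfl⟩)
  · exact Or.inr (Or.inl rfl)

lemma cc_smul_comb (p q y : X × StrongDual ℝ X) (a b : ℝ) :
    cc (a • p + b • q) y = a * cc p y + b * cc q y := by
  simp only [cc, Prod.fst_add, Prod.snd_add, Prod.smul_fst, Prod.smul_snd, map_add, map_smul,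
    ContinuousLinearMap.add_apply, ContinuousLinearMap.smul_apply, smul_eq_mul]
  ring

lemma cc_identity (r p v w : X × StrongDual ℝ X) :
    cc (r - v) (p + w) + cc (r + v) (p - w) = 2 * cc r p - 2 * cc v w := by
  simp only [cc, Prod.fst_add, Prod.snd_add, Prod.fst_sub, Prod.snd_sub, map_add, map_sub,
    ContinuousLinearMap.add_apply, ContinuousLinearMap.sub_apply]
  ring

lemma cc_cont (q : X × StrongDual ℝ X) : Continuous (fun z : X × StrongDual ℝ X => cc z q) := by
  have c1 : Continuous fun z : X × StrongDual ℝ X => q.2 z.1 :=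
    q.2.continuous.comp continuous_fst
  have c2 : Continuous fun z : X × StrongDual ℝ X => z.2 q.1 :=
    (ContinuousLinearMap.apply ℝ ℝ q.1).continuous.comp continuous_snd
  exact c1.add c2

lemma JT_convex (f : X × StrongDual ℝ X → EReal) : EConvexOn (JT f) := by
  intro p q a b ha hb hab
  rw [JT_apply]
  refine iSup_le fun y => ?_
  rw [cc_smul_comb]
  rcases ereal_trich (f y) with hby | hty | ⟨F, hF⟩
  · -- f y = ⊥ : RHS is ⊤
    have hp : JT f p = ⊤ := by
      have := le_JT f p y; rw [hby, EReal.coe_sub_bot, top_le_iff] at this; exact this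
    have hq : JT f q = ⊤ := by
      have := le_JT f q y; rw [hby, EReal.coe_sub_bot, top_le_iff] at this; exact this
    rw [hp, hq]
    rcases eq_or_lt_of_le ha with ha0 | hapos
    · have hb1 : b = 1 := by linarith
      rw [← ha0, hb1]; simp
    · rw [EReal.coe_mul_top_of_pos hapos]
      have : ((b:ℝ):EReal) * ⊤ ≠ ⊥ := by
        rcases eq_or_lt_of_le hb with hb0 | hbpos
        · rw [← hb0]; simp
        · rw [EReal.coe_mul_top_of_pos hbpos]; exact top_ne_bot
      rw [EReal.top_add_of_ne_bot this]
      exact le_top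
  · rw [hty, EReal.sub_top]; exact bot_le
  · rw [hF, ← EReal.coe_sub]
    have key : (a * cc p y + b * cc q y - F : ℝ) = a * (cc p y - F) + b * (cc q y - F) := by
      have : a * F + b * F = F := by rw [← add_mul, hab, one_mul]
      ring_nf
      linarith [this]
    rw [key, EReal.coe_add, EReal.coe_mul, EReal.coe_mul]
    have h1 : ((cc p y - F : ℝ) : EReal) ≤ JT f p := by
      have := le_JT f p y; rwa [hF, ← EReal.coe_sub] at this
    have h2 : ((cc q y - F : ℝ) : EReal) ≤ JT f q := by
      have := le_JT f q y; rwa [hF, ← EReal.coe_sub] at this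
    exact add_le_add (mul_le_mul_of_nonneg_left h1 (EReal.coe_nonneg.2 ha))
      (mul_le_mul_of_nonneg_left h2 (EReal.coe_nonneg.2 hb))

lemma JT_lsc (f : X × StrongDual ℝ X → EReal) : LowerSemicontinuous (JT f) := by
  intro x y hy
  rw [JT_apply] at hy
  obtain ⟨q, hq⟩ := lt_iSup_iff.mp hy
  rcases ereal_trich (f q) with hb | ht | ⟨F, hF⟩
  · refine Filter.Eventually.of_forall fun z => ?_
    have h1 : ((cc z q : ℝ):EReal) - f q ≤ JT f z := le_JT f z q
    rw [hb, EReal.coe_sub_bot] at h1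
    exact lt_of_lt_of_le (lt_of_lt_of_le hq le_top) h1
  · rw [ht, EReal.sub_top] at hq; exact absurd hq not_lt_bot
  · rw [hF, ← EReal.coe_sub] at hq
    rcases ereal_trich y with hyb | hyt | ⟨Y, hY⟩
    · refine Filter.Eventually.of_forall fun z => ?_
      have h1 := le_JT f z q
      rw [hF, ← EReal.coe_sub] at h1
      rw [hyb]
      exact lt_of_lt_of_le (EReal.bot_lt_coe _) h1
    · rw [hyt] at hq; exact absurd hq (by simp)
    · rw [hY] at hq ⊢
      rw [EReal.coe_lt_coe_iff] at hq
      have hopen : IsOpen {z : X × StrongDual ℝ X | Y < cc z q - F} :=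
        isOpen_lt continuous_const ((cc_cont q).sub continuous_const)
      have hmem : x ∈ {z : X × StrongDual ℝ X | Y < cc z q - F} := hq
      filter_upwards [hopen.mem_nhds hmem] with z hz
      have h1 := le_JT f z q
      rw [hF, ← EReal.coe_sub] at h1
      exact lt_of_lt_of_le (EReal.coe_lt_coe_iff.2 hz) h1

/-- Quadratic term. -/
def Qf (w : X × StrongDual ℝ X) : ℝ := (‖w.1‖^2 + ‖w.2‖^2)/2

lemma Qf_nonneg (w : X × StrongDual ℝ X) : 0 ≤ Qf w := by
  have := sq_nonneg ‖w.1‖; have := sq_nonneg ‖w.2‖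
  unfold Qf; positivity

lemma Qf_zero : Qf (0 : X × StrongDual ℝ X) = 0 := by
  simp [Qf]

lemma Qf_smul (a : ℝ) (w : X × StrongDual ℝ X) : Qf (a • w) = a^2 * Qf w := by
  simp only [Qf, Prod.smul_fst, Prod.smul_snd, norm_smul, mul_pow, Real.norm_eq_abs, sq_abs]
  ring

lemma cc_le_QQ (v w : X × StrongDual ℝ X) : cc v w ≤ Qf v + Qf w := by
  have h1 : w.2 v.1 ≤ ‖w.2‖ * ‖v.1‖ :=
    le_trans (le_abs_self _) (w.2.le_opNorm v.1)
  have h2 : v.2 w.1 ≤ ‖v.2‖ * ‖w.1‖ :=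
    le_trans (le_abs_self _) (v.2.le_opNorm w.1)
  have h3 : ‖w.2‖ * ‖v.1‖ ≤ (‖w.2‖^2 + ‖v.1‖^2)/2 := by nlinarith [sq_nonneg (‖w.2‖ - ‖v.1‖)]
  have h4 : ‖v.2‖ * ‖w.1‖ ≤ (‖v.2‖^2 + ‖w.1‖^2)/2 := by nlinarith [sq_nonneg (‖v.2‖ - ‖w.1‖)]
  unfold cc Qf
  linarith

/-- `S k h₀ r w` is one term of the proximal-average infimum. -/
def Sfun (k h₀ : X × StrongDual ℝ X → EReal) (r w : X × StrongDual ℝ X) : EReal :=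
  ((1/2:ℝ):EReal) * k (r + w) + ((1/2:ℝ):EReal) * h₀ (r - w) + ((Qf w : ℝ):EReal)

/-- The proximal average of `k` and `h₀`. -/
def ufun (k h₀ : X × StrongDual ℝ X → EReal) (r : X × StrongDual ℝ X) : EReal :=
  ⨅ w, Sfun k h₀ r w

lemma add3_ne_bot {a b c : EReal} (ha : a ≠ ⊥) (hb : b ≠ ⊥) (hc : c ≠ ⊥) :
    a + b + c ≠ ⊥ := by
  simp [EReal.add_eq_bot_iff, ha, hb, hc]

lemma half_mul_ne_bot {x : EReal} (hx : x ≠ ⊥) : ((1/2:ℝ):EReal) * x ≠ ⊥ := by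
  rcases ereal_trich x with h | h | ⟨r, h⟩
  · exact absurd h hx
  · rw [h, EReal.coe_mul_top_of_pos (by norm_num)]; exact top_ne_bot
  · rw [h, ← EReal.coe_mul]; exact EReal.coe_ne_bot _

lemma half_mul_top : ((1/2:ℝ):EReal) * (⊤ : EReal) = ⊤ :=
  EReal.coe_mul_top_of_pos (by norm_num)

lemma half_add_half {a : EReal} (ha : a ≠ ⊥) : ((1/2:ℝ):EReal) * a + ((1/2:ℝ):EReal) * a = a := by
  rcases ereal_trich a with h | h | ⟨r, h⟩
  · exact absurd h ha
  · rw [h, half_mul_top, EReal.top_add_top]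
  · rw [h, ← EReal.coe_mul, ← EReal.coe_add, EReal.coe_eq_coe_iff]; ring

lemma Sfun_ne_bot {k h₀ : X × StrongDual ℝ X → EReal}
    (hkbot : ∀ q, k q ≠ ⊥) (hbot : ∀ q, h₀ q ≠ ⊥) (r w : X × StrongDual ℝ X) :
    Sfun k h₀ r w ≠ ⊥ :=
  add3_ne_bot (half_mul_ne_bot (hkbot _)) (half_mul_ne_bot (hbot _)) (EReal.coe_ne_bot _)

lemma JT_ne_bot (f : X × StrongDual ℝ X → EReal) (a q0 : X × StrongDual ℝ X)
    (hq0 : f q0 ≠ ⊤) : JT f a ≠ ⊥ := by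
  intro hb
  have h := le_JT f a q0
  rw [hb, le_bot_iff] at h
  rcases ereal_trich (f q0) with h0 | h0 | ⟨F, h0⟩
  · rw [h0, EReal.coe_sub_bot] at h; exact top_ne_bot h
  · exact hq0 h0
  · rw [h0, ← EReal.coe_sub] at h; exact EReal.coe_ne_bot _ h

lemma fy (f : X × StrongDual ℝ X → EReal) (a b : X × StrongDual ℝ X)
    (hb : f b ≠ ⊥) (ha : JT f a ≠ ⊥) : ((cc a b : ℝ) : EReal) ≤ JT f a + f b :=
  (EReal.sub_le_iff_le_add (Or.inl hb) (Or.inr ha)).1 (le_JT f a b)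

lemma JT_anti {f g : X × StrongDual ℝ X → EReal} (hfg : f ≤ g) : JT g ≤ JT f := by
  intro p
  rw [JT_apply, JT_apply]
  exact iSup_mono fun q => EReal.sub_le_sub le_rfl (hfg q)

lemma JJ_le (f : X × StrongDual ℝ X → EReal) : ∀ p, JT (JT f) p ≤ f p := by
  intro p
  rw [JT_apply]
  refine iSup_le fun q => ?_
  have h1 : ((cc q p : ℝ) : EReal) - f p ≤ JT f q := le_JT f q p
  rw [cc_comm q p] at h1
  rcases ereal_trich (f p) with hb | ht | ⟨F, hF⟩
  · rw [hb, EReal.coe_sub_bot, top_le_iff] at h1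
    rw [h1, EReal.sub_top, hb]
  · rw [ht]; exact le_top
  · rw [hF] at h1 ⊢
    rcases ereal_trich (JT f q) with hb2 | ht2 | ⟨B, hB⟩
    · rw [hb2, le_bot_iff, ← EReal.coe_sub] at h1
      exact absurd h1 (EReal.coe_ne_bot _)
    · rw [ht2, EReal.sub_top]; exact bot_le
    · rw [hB] at h1 ⊢
      rw [← EReal.coe_sub] at h1 ⊢
      rw [EReal.coe_le_coe_iff] at h1 ⊢
      linarith

/-- The key inequality (★). -/
lemma star_ineq (h₀ : X × StrongDual ℝ X → EReal)
    (hbot : ∀ q, h₀ q ≠ ⊥) (hkbot : ∀ q, JT h₀ q ≠ ⊥)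
    (hJkbot : ∀ a, JT (JT h₀) a ≠ ⊥) (r p w v : X × StrongDual ℝ X) :
    ((cc r p : ℝ):EReal) ≤ Sfun (JT h₀) h₀ p w + Sfun (JT h₀) h₀ r v := by
  have hSbot := Sfun_ne_bot (k := JT h₀) (h₀ := h₀) hkbot hbot
  -- if any ingredient of either S is ⊤, that S is ⊤ and we are done
  have htop1 : ∀ r' w' : X × StrongDual ℝ X,
      (JT h₀ (r' + w') = ⊤ ∨ h₀ (r' - w') = ⊤) → Sfun (JT h₀) h₀ r' w' = ⊤ := by
    rintro r' w' (ht | ht) <;> unfold Sfun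
    · rw [ht, half_mul_top, EReal.top_add_of_ne_bot (half_mul_ne_bot (hbot _)),
        EReal.top_add_of_ne_bot (EReal.coe_ne_bot _)]
    · rw [ht, half_mul_top, EReal.add_top_of_ne_bot (half_mul_ne_bot (hkbot _)),
        EReal.top_add_of_ne_bot (EReal.coe_ne_bot _)]
  by_cases hK1 : JT h₀ (p + w) = ⊤
  · rw [htop1 p w (Or.inl hK1), EReal.top_add_of_ne_bot (hSbot r v)]; exact le_top
  by_cases hH1 : h₀ (p - w) = ⊤
  · rw [htop1 p w (Or.inr hH1), EReal.top_add_of_ne_bot (hSbot r v)]; exact le_top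
  by_cases hK2 : JT h₀ (r + v) = ⊤
  · rw [htop1 r v (Or.inl hK2), EReal.add_top_of_ne_bot (hSbot p w)]; exact le_top
  by_cases hH2 : h₀ (r - v) = ⊤
  · rw [htop1 r v (Or.inr hH2), EReal.add_top_of_ne_bot (hSbot p w)]; exact le_top
  -- all finite
  obtain ⟨K1, hK1'⟩ : ∃ x : ℝ, JT h₀ (p + w) = x := by
    rcases ereal_trich (JT h₀ (p+w)) with hc | hc | hc
    exacts [absurd hc (hkbot _), absurd hc hK1, hc]
  obtain ⟨H1, hH1'⟩ : ∃ x : ℝ, h₀ (p - w) = x := by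
    rcases ereal_trich (h₀ (p-w)) with hc | hc | hc
    exacts [absurd hc (hbot _), absurd hc hH1, hc]
  obtain ⟨K2, hK2'⟩ : ∃ x : ℝ, JT h₀ (r + v) = x := by
    rcases ereal_trich (JT h₀ (r+v)) with hc | hc | hc
    exacts [absurd hc (hkbot _), absurd hc hK2, hc]
  obtain ⟨H2, hH2'⟩ : ∃ x : ℝ, h₀ (r - v) = x := by
    rcases ereal_trich (h₀ (r-v)) with hc | hc | hc
    exacts [absurd hc (hbot _), absurd hc hH2, hc]
  -- Fenchel–Young inequalities, in real form
  have fy1 : cc (r - v) (p + w) ≤ H2 + K1 := by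
    have e1 : ((cc (r-v) (p+w) : ℝ):EReal) ≤ JT (JT h₀) (r - v) + JT h₀ (p + w) :=
      fy (JT h₀) _ _ (hkbot _) (hJkbot _)
    have e2 : JT (JT h₀) (r - v) + JT h₀ (p + w) ≤ h₀ (r - v) + JT h₀ (p + w) :=
      add_le_add (JJ_le h₀ _) le_rfl
    have e3 := e1.trans e2
    rw [hH2', hK1', ← EReal.coe_add, EReal.coe_le_coe_iff] at e3
    exact e3
  have fy2 : cc (r + v) (p - w) ≤ K2 + H1 := by
    have e1 : ((cc (r+v) (p-w) : ℝ):EReal) ≤ JT h₀ (r + v) + h₀ (p - w) :=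
      fy h₀ _ _ (hbot _) (hkbot _)
    rw [hK2', hH1', ← EReal.coe_add, EReal.coe_le_coe_iff] at e1
    exact e1
  have idty := cc_identity r p v w
  have cs := cc_le_QQ v w
  unfold Sfun
  rw [hK1', hH1', hK2', hH2', ← EReal.coe_mul, ← EReal.coe_mul, ← EReal.coe_mul, ← EReal.coe_mul,
    ← EReal.coe_add, ← EReal.coe_add, ← EReal.coe_add, ← EReal.coe_add, ← EReal.coe_add,
    EReal.coe_le_coe_iff]
  linarith

lemma pairing_le_ufun (h₀ : X × StrongDual ℝ X → EReal)
    (hbot : ∀ q, h₀ q ≠ ⊥) (hkbot : ∀ q, JT h₀ q ≠ ⊥)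
    (hJkbot : ∀ a, JT (JT h₀) a ≠ ⊥) (p : X × StrongDual ℝ X) :
    ((pairingFn p : ℝ):EReal) ≤ ufun (JT h₀) h₀ p := by
  refine le_iInf fun w => ?_
  have h2 := star_ineq h₀ hbot hkbot hJkbot p p w w
  rcases ereal_trich (Sfun (JT h₀) h₀ p w) with hb | ht | ⟨s, hs⟩
  · exact absurd hb (Sfun_ne_bot hkbot hbot p w)
  · rw [ht]; exact le_top
  · rw [hs, ← EReal.coe_add, cc_self, EReal.coe_le_coe_iff] at h2
    rw [hs, EReal.coe_le_coe_iff]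
    linarith

lemma JT_ufun_le (h₀ : X × StrongDual ℝ X → EReal)
    (hbot : ∀ q, h₀ q ≠ ⊥) (hkbot : ∀ q, JT h₀ q ≠ ⊥)
    (hJkbot : ∀ a, JT (JT h₀) a ≠ ⊥) :
    JT (ufun (JT h₀) h₀) ≤ ufun (JT h₀) h₀ := by
  have hu_ne_bot : ∀ p, ufun (JT h₀) h₀ p ≠ ⊥ := fun p hb => by
    have h1 := pairing_le_ufun h₀ hbot hkbot hJkbot p
    rw [hb, le_bot_iff] at h1
    exact EReal.coe_ne_bot _ h1
  intro r
  rw [JT_apply]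
  refine iSup_le fun p => ?_
  refine le_iInf fun v => ?_
  rcases ereal_trich (ufun (JT h₀) h₀ p) with hb | ht | ⟨U, hU⟩
  · exact absurd hb (hu_ne_bot p)
  · rw [ht, EReal.sub_top]; exact bot_le
  · rcases ereal_trich (Sfun (JT h₀) h₀ r v) with hb2 | ht2 | ⟨s, hs⟩
    · exact absurd hb2 (Sfun_ne_bot hkbot hbot r v)
    · rw [ht2]; exact le_top
    · have hall : ((cc r p - s : ℝ):EReal) ≤ ufun (JT h₀) h₀ p := by
        refine le_iInf fun w => ?_
        have h3 := star_ineq h₀ hbot hkbot hJkbot r p w v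
        rw [hs] at h3
        rw [EReal.coe_sub]
        exact (EReal.sub_le_iff_le_add (Or.inl (EReal.coe_ne_bot s))
          (Or.inl (EReal.coe_ne_top s))).2 h3
      rw [hU, EReal.coe_le_coe_iff] at hall
      rw [hU, hs, ← EReal.coe_sub, EReal.coe_le_coe_iff]
      linarith

lemma Sfun_zero (k h₀ : X × StrongDual ℝ X → EReal) (p : X × StrongDual ℝ X) :
    Sfun k h₀ p 0 = ((1/2:ℝ):EReal) * k p + ((1/2:ℝ):EReal) * h₀ p := by
  unfold Sfun
  rw [add_zero, sub_zero, Qf_zero, EReal.coe_zero, add_zero]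

lemma half_comb_le {a b : EReal} (hle : a ≤ b) (hb : b ≠ ⊥) :
    ((1/2:ℝ):EReal) * a + ((1/2:ℝ):EReal) * b ≤ b :=
  (add_le_add (mul_le_mul_of_nonneg_left hle (EReal.coe_nonneg.2 (by norm_num))) le_rfl).trans
    (le_of_eq (half_add_half hb))

end MSAux

/-- for `h ∈ H(T)` with `h ≥ J h`, an element `h₀ ∈ L(h)` is minimal in
`L(h)` (pointwise order) iff `h₀ = J h₀`. -/
theorem minimal_iff_fixed_point [CompleteSpace X]
    (T : Set (X × StrongDual ℝ X)) (hT : MaximalMonotoneOp T)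
    (h : X × StrongDual ℝ X → EReal) (hh : h ∈ HT T) (hJ : JT h ≤ h)
    (h₀ : X × StrongDual ℝ X → EReal) (hh₀ : h₀ ∈ Lfam T h) :
    Minimal (· ∈ Lfam T h) h₀ ↔ h₀ = JT h₀ := by
  constructor
  · intro hmin
    obtain ⟨hHT, hle_h, hJh₀⟩ := hh₀
    obtain ⟨hconv, hlsc, hge, heqT⟩ := hHT
    -- T is nonempty
    obtain ⟨pb, hpbT⟩ : T.Nonempty := by
      by_cases hc : ∀ q ∈ T,
          0 ≤ (((0:X), (0:StrongDual ℝ X)).2 - q.2) (((0:X), (0:StrongDual ℝ X)).1 - q.1)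
      · exact ⟨_, hT.2 _ hc⟩
      · push_neg at hc; obtain ⟨q, hq, -⟩ := hc; exact ⟨q, hq⟩
    have hpi : h₀ pb = ((pairingFn pb : ℝ) : EReal) := heqT pb hpbT
    have hbot : ∀ q, h₀ q ≠ ⊥ := by
      intro q hb
      have h1 := hge q
      rw [hb, le_bot_iff] at h1
      exact EReal.coe_ne_bot _ h1
    have hkbot : ∀ q, JT h₀ q ≠ ⊥ := fun q =>
      MSAux.JT_ne_bot h₀ q pb (by rw [hpi]; exact EReal.coe_ne_top _)
    have hk_pb_ne_top : JT h₀ pb ≠ ⊤ := by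
      intro htop
      have h1 := hJh₀ pb
      rw [htop, hpi, top_le_iff] at h1
      exact EReal.coe_ne_top _ h1
    have hJkbot : ∀ a, JT (JT h₀) a ≠ ⊥ := fun a => MSAux.JT_ne_bot (JT h₀) a pb hk_pb_ne_top
    have hugeπ := MSAux.pairing_le_ufun h₀ hbot hkbot hJkbot
    have hJu := MSAux.JT_ufun_le h₀ hbot hkbot hJkbot
    -- u ≤ h₀
    have hu_le : ∀ p, MSAux.ufun (JT h₀) h₀ p ≤ h₀ p := by
      intro p
      have h1 : MSAux.ufun (JT h₀) h₀ p ≤ MSAux.Sfun (JT h₀) h₀ p 0 := iInf_le _ 0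
      rw [MSAux.Sfun_zero] at h1
      exact h1.trans (MSAux.half_comb_le (hJh₀ p) (hbot p))
    -- the regularized function g = J (J u)
    have hg_le_u : ∀ p, JT (JT (MSAux.ufun (JT h₀) h₀)) p ≤ MSAux.ufun (JT h₀) h₀ p :=
      MSAux.JJ_le _
    have hJg_le_g : JT (JT (JT (MSAux.ufun (JT h₀) h₀))) ≤ JT (JT (MSAux.ufun (JT h₀) h₀)) :=
      fun p => le_trans (MSAux.JJ_le (JT (MSAux.ufun (JT h₀) h₀)) p) (MSAux.JT_anti hJu p)
    have hg_le_h₀ : JT (JT (MSAux.ufun (JT h₀) h₀)) ≤ h₀ := fun p => (hg_le_u p).trans (hu_le p)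
    have hπ_le_g : ∀ p, ((pairingFn p : ℝ):EReal) ≤ JT (JT (MSAux.ufun (JT h₀) h₀)) p := by
      intro p
      have h1 : ((MSAux.cc p p : ℝ):EReal) - JT (JT (MSAux.ufun (JT h₀) h₀)) p
          ≤ JT (JT (JT (MSAux.ufun (JT h₀) h₀))) p := MSAux.le_JT _ p p
      have h2 := hJg_le_g p
      rcases MSAux.ereal_trich (JT (JT (MSAux.ufun (JT h₀) h₀)) p) with hb | ht | ⟨G, hG⟩
      · exfalso
        rw [hb, EReal.coe_sub_bot, top_le_iff] at h1
        rw [h1, hb, top_le_iff] at h2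
        exact bot_ne_top h2
      · rw [ht]; exact le_top
      · rw [hG] at h1 ⊢
        have h3 := h1.trans h2
        rw [hG, ← EReal.coe_sub, MSAux.cc_self, EReal.coe_le_coe_iff] at h3
        rw [EReal.coe_le_coe_iff]
        linarith
    have hgL : JT (JT (MSAux.ufun (JT h₀) h₀)) ∈ Lfam T h := by
      refine ⟨⟨MSAux.JT_convex _, MSAux.JT_lsc _, hπ_le_g, fun p hp => le_antisymm ?_ ?_⟩,
        fun p => (hg_le_h₀ p).trans (hle_h p), hJg_le_g⟩
      · exact le_of_le_of_eq (hg_le_h₀ p) (heqT p hp)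
      · exact hπ_le_g p
    have h₀_le_g : h₀ ≤ JT (JT (MSAux.ufun (JT h₀) h₀)) := hmin.2 hgL hg_le_h₀
    have h₀_le_u : ∀ p, h₀ p ≤ MSAux.ufun (JT h₀) h₀ p := fun p => (h₀_le_g p).trans (hg_le_u p)
    -- conclude h₀ = J h₀ pointwise
    funext p₀
    refine le_antisymm ?_ (hJh₀ p₀)
    rcases MSAux.ereal_trich (JT h₀ p₀) with hb | ht | ⟨K, hK⟩
    · exact absurd hb (hkbot p₀)
    · rw [ht]; exact le_top
    rcases MSAux.ereal_trich (h₀ p₀) with hb' | ht' | ⟨H, hH⟩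
    · exact absurd hb' (hbot p₀)
    · -- the hard case : h₀ p₀ = ⊤ but J h₀ p₀ is finite; contradiction via a sequence
      exfalso
      set dd := pb - p₀ with hdd
      set seq : ℕ → X × StrongDual ℝ X := fun n => p₀ + ((1/2:ℝ)^n) • dd with hseq
      have hseq0 : seq 0 = pb := by
        simp only [hseq, pow_zero, one_smul, hdd]
        abel
      have hplus : ∀ n : ℕ, seq (n+1) + ((-((1/2:ℝ)^(n+1))) • dd) = p₀ := by
        intro n
        simp only [hseq, neg_smul]
        module
      have hminus : ∀ n : ℕ, seq (n+1) - ((-((1/2:ℝ)^(n+1))) • dd) = seq n := by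
        intro n
        simp only [hseq, neg_smul, sub_neg_eq_add]
        module
      have hQb : ∀ n : ℕ, MSAux.Qf ((-((1/2:ℝ)^(n+1))) • dd) ≤ MSAux.Qf dd := by
        intro n
        rw [MSAux.Qf_smul]
        have h1 : ((1/2:ℝ)^(n+1)) ≤ 1 := pow_le_one₀ (by norm_num) (by norm_num)
        have h2 : (0:ℝ) < (1/2:ℝ)^(n+1) := by positivity
        have h3 := MSAux.Qf_nonneg dd
        rw [neg_sq]
        have h4 : ((1/2:ℝ)^(n+1))^2 ≤ 1 := by nlinarith
        nlinarith
      set C := MSAux.Qf dd with hC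
      set M := max (pairingFn pb) (K + 2*C) with hM
      have hind : ∀ n, h₀ (seq n) ≤ ((M:ℝ):EReal) := by
        intro n
        induction n with
        | zero =>
          rw [hseq0, hpi]
          exact EReal.coe_le_coe_iff.2 (le_max_left _ _)
        | succ n ih =>
          have h1 : h₀ (seq (n+1)) ≤ MSAux.Sfun (JT h₀) h₀ (seq (n+1)) ((-((1/2:ℝ)^(n+1))) • dd) :=
            (h₀_le_u _).trans (iInf_le _ _)
          unfold MSAux.Sfun at h1
          rw [hplus n, hminus n, hK] at h1
          have h2 : ((1/2:ℝ):EReal) * ((K:ℝ):EReal) + ((1/2:ℝ):EReal) * h₀ (seq n)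
                + ((MSAux.Qf ((-((1/2:ℝ)^(n+1))) • dd) :ℝ):EReal)
              ≤ ((1/2:ℝ):EReal) * ((K:ℝ):EReal) + ((1/2:ℝ):EReal) * ((M:ℝ):EReal) + ((C:ℝ):EReal) :=
            add_le_add (add_le_add le_rfl (mul_le_mul_of_nonneg_left ih
              (EReal.coe_nonneg.2 (by norm_num)))) (EReal.coe_le_coe_iff.2 (hQb n))
          have h3 := h1.trans h2
          rw [← EReal.coe_mul, ← EReal.coe_mul, ← EReal.coe_add, ← EReal.coe_add] at h3
          refine h3.trans (EReal.coe_le_coe_iff.2 ?_)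
          have h4 : K + 2*C ≤ M := le_max_right _ _
          linarith
      have htpow : Filter.Tendsto (fun n : ℕ => ((1/2:ℝ)^n)) Filter.atTop (nhds 0) :=
        tendsto_pow_atTop_nhds_zero_of_lt_one (by norm_num) (by norm_num)
      have htend : Filter.Tendsto seq Filter.atTop (nhds p₀) := by
        have h1 := htpow.smul_const dd
        rw [zero_smul] at h1
        have h2 := (tendsto_const_nhds (x := p₀) (f := Filter.atTop)).add h1
        rw [add_zero] at h2
        exact h2
      have hev : ∀ᶠ z in nhds p₀, ((M:ℝ):EReal) < h₀ z :=
        hlsc p₀ ((M:ℝ):EReal) (by show ((M:ℝ):EReal) < h₀ p₀; rw [ht']; exact EReal.coe_lt_top _)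
      obtain ⟨n, hn⟩ := (htend.eventually hev).exists
      exact absurd hn (not_lt.2 (hind n))
    · -- the finite case
      have h1 := (h₀_le_u p₀).trans ((iInf_le _ 0).trans (le_of_eq (MSAux.Sfun_zero _ _ _)))
      rw [hH, hK, ← EReal.coe_mul, ← EReal.coe_mul, ← EReal.coe_add, EReal.coe_le_coe_iff] at h1
      rw [hH, hK, EReal.coe_le_coe_iff]
      linarith
  · intro hfix
    refine ⟨hh₀, fun g hg hgle => ?_⟩
    intro p
    calc h₀ p = JT h₀ p := by rw [← hfix]
      _ ≤ JT g p := MSAux.JT_anti hgle p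
      _ ≤ g p := hg.2.2 p
end
end

section
/- Let X be a real Banach space, T : X ⇉ X* a maximal monotone operator, and h ∈ H(T). Define ĥ := max(h, J h) (pointwise maximum). Then ĥ ∈ H(T) and ĥ ≥ J ĥ, i.e., ĥ ∈ H_a(T). -/
/- Setting: `X` is a real Banach space, `StrongDual ℝ X` its topological dual.
A point-to-set operator `T : X ⇉ X*` is identified with its graph,
a subset of `X × StrongDual ℝ X`.  Extended-real-valued functions
(`ℝ ∪ {+∞}`) are modelled by `EReal`. -/

noncomputable section

variable {X : Type*} [NormedAddCommGroup X] [NormedSpace ℝ X]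

/-! ### Auxiliary lemmas -/

lemma lsc_iSup' {α : Type*} [TopologicalSpace α] {ι : Sort*} {f : ι → α → EReal}
    (h : ∀ i, LowerSemicontinuous (f i)) : LowerSemicontinuous (fun x => ⨆ i, f i x) :=
  fun x => lowerSemicontinuousAt_iSup (fun i => h i x)

lemma lsc_max' {α : Type*} [TopologicalSpace α] {f g : α → EReal}
    (hf : LowerSemicontinuous f) (hg : LowerSemicontinuous g) :
    LowerSemicontinuous (fun x => f x ⊔ g x) := by
  intro x y hy
  rcases lt_sup_iff.1 hy with h | h
  · exact (hf x y h).mono fun z hz => hz.trans_le le_sup_left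
  · exact (hg x y h).mono fun z hz => hz.trans_le le_sup_right

lemma h_ne_bot' {h : X × StrongDual ℝ X → EReal}
    (hge : ∀ p, (pairingFn p : EReal) ≤ h p) (q : X × StrongDual ℝ X) : h q ≠ ⊥ :=
  fun hbot => by
    have := hge q; rw [hbot] at this; exact (EReal.coe_ne_bot _ (le_bot_iff.1 this))

lemma JT_lsc' {h : X × StrongDual ℝ X → EReal}
    (hge : ∀ p, (pairingFn p : EReal) ≤ h p) : LowerSemicontinuous (JT h) := by
  apply lsc_iSup'
  intro q
  by_cases hq : h q = ⊤
  · have : (fun p : X × StrongDual ℝ X => ((q.2 p.1 + p.2 q.1 : ℝ) : EReal) - h q)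
        = fun _ => (⊥ : EReal) := by
      funext p; rw [hq, EReal.sub_top]
    rw [this]; exact lowerSemicontinuous_const
  · have hcoe : ((h q).toReal : EReal) = h q := EReal.coe_toReal hq (h_ne_bot' hge q)
    have : (fun p : X × StrongDual ℝ X => ((q.2 p.1 + p.2 q.1 : ℝ) : EReal) - h q)
        = fun p => (((q.2 p.1 + p.2 q.1 - (h q).toReal : ℝ)) : EReal) := by
      funext p; rw [EReal.coe_sub, hcoe]
    rw [this]
    apply Continuous.lowerSemicontinuous
    apply continuous_coe_real_ereal.comp
    exact ((q.2.continuous.comp continuous_fst).add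
      (((ContinuousLinearMap.apply ℝ ℝ q.1).continuous).comp continuous_snd)).sub continuous_const

lemma JT_convex' {h : X × StrongDual ℝ X → EReal}
    (hge : ∀ p, (pairingFn p : EReal) ≤ h p) : EConvexOn (JT h) := by
  intro p q a b ha hb hab
  rcases ha.eq_or_lt with rfl | ha'
  · simp only [zero_add] at hab
    subst hab
    simp [JT]
  rcases hb.eq_or_lt with rfl | hb'
  · simp only [add_zero] at hab
    subst hab
    simp [JT]
  apply iSup_le
  intro r
  have hfst : (a • p + b • q).1 = a • p.1 + b • q.1 := rfl
  have hsnd : (a • p + b • q).2 = a • p.2 + b • q.2 := rfl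
  have hlin : (r.2 (a • p + b • q).1 + (a • p + b • q).2 r.1 : ℝ)
      = a * (r.2 p.1 + p.2 r.1) + b * (r.2 q.1 + q.2 r.1) := by
    rw [hfst, hsnd]
    simp only [map_add, map_smul, ContinuousLinearMap.add_apply,
      ContinuousLinearMap.coe_smul', Pi.smul_apply, smul_eq_mul]
    ring
  rw [hlin]
  set u := (r.2 p.1 + p.2 r.1 : ℝ)
  set v := (r.2 q.1 + q.2 r.1 : ℝ)
  have step2 : (a : EReal) * ((u : EReal) - h r) + (b : EReal) * ((v : EReal) - h r)
      ≤ (a : EReal) * JT h p + (b : EReal) * JT h q := by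
    gcongr
    · exact le_iSup (fun s : X × StrongDual ℝ X =>
        ((s.2 p.1 + p.2 s.1 : ℝ) : EReal) - h s) r
    · exact le_iSup (fun s : X × StrongDual ℝ X =>
        ((s.2 q.1 + q.2 s.1 : ℝ) : EReal) - h s) r
  refine le_trans ?_ step2
  by_cases hr : h r = ⊤
  · rw [hr, EReal.sub_top]; exact bot_le
  · have hcoe : ((h r).toReal : EReal) = h r := EReal.coe_toReal hr (h_ne_bot' hge r)
    rw [← hcoe, ← EReal.coe_sub, ← EReal.coe_sub, ← EReal.coe_sub,
      ← EReal.coe_mul, ← EReal.coe_mul, ← EReal.coe_add, EReal.coe_le_coe_iff]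
    have : a * (u - (h r).toReal) + b * (v - (h r).toReal)
        = a * u + b * v - (h r).toReal := by
      linear_combination (-(h r).toReal) * hab
    linarith

lemma JT_antitone' {g h : X × StrongDual ℝ X → EReal} (hle : g ≤ h) :
    JT h ≤ JT g := by
  intro p
  apply iSup_le
  intro r
  exact le_trans (EReal.sub_le_sub le_rfl (hle r))
    (le_iSup (fun s : X × StrongDual ℝ X => ((s.2 p.1 + p.2 s.1 : ℝ) : EReal) - g s) r)

lemma key_ineq' {T : Set (X × StrongDual ℝ X)}
    {h : X × StrongDual ℝ X → EReal} (hconv : EConvexOn h)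
    (hge : ∀ p, (pairingFn p : EReal) ≤ h p)
    (heq : ∀ p ∈ T, h p = (pairingFn p : EReal))
    {p : X × StrongDual ℝ X} (hp : p ∈ T) (q : X × StrongDual ℝ X) :
    ((q.2 p.1 + p.2 q.1 - pairingFn p : ℝ) : EReal) ≤ h q := by
  by_cases hq : h q = ⊤
  · rw [hq]; exact le_top
  have hcoe : ((h q).toReal : EReal) = h q := EReal.coe_toReal hq (h_ne_bot' hge q)
  set c := (h q).toReal
  rw [← hcoe, EReal.coe_le_coe_iff]
  set A := pairingFn p
  set B := (p.2 q.1 : ℝ)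
  set C := (q.2 p.1 : ℝ)
  set D := (q.2 q.1 : ℝ)
  have key : ∀ t : ℝ, 0 < t → t ≤ 1 → (1 - t) * (C + B - A) + t * D ≤ c := by
    intro t ht ht1
    have hconvt := hconv p q (1 - t) t (by linarith) (le_of_lt ht) (by ring)
    rw [heq p hp] at hconvt
    have hpair : (pairingFn ((1 - t) • p + t • q) : EReal) ≤ h ((1 - t) • p + t • q) :=
      hge _
    have hcomb := le_trans hpair hconvt
    rw [← hcoe, ← EReal.coe_mul, ← EReal.coe_mul, ← EReal.coe_add,
      EReal.coe_le_coe_iff] at hcomb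
    have hval : pairingFn ((1 - t) • p + t • q)
        = (1 - t) ^ 2 * A + (1 - t) * t * B + t * (1 - t) * C + t ^ 2 * D := by
      show ((1 - t) • p.2 + t • q.2) ((1 - t) • p.1 + t • q.1) = _
      simp only [map_add, map_smul, ContinuousLinearMap.add_apply,
        ContinuousLinearMap.coe_smul', Pi.smul_apply, smul_eq_mul]
      show _ = (1-t)^2 * (p.2 p.1) + (1-t)*t*(p.2 q.1) + t*(1-t)*(q.2 p.1) + t^2*(q.2 q.1)
      ring
    rw [hval] at hcomb
    nlinarith [hcomb]
  set E := C + B - A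
  show E ≤ c
  by_cases hd : E ≤ D
  · have := key 1 one_pos le_rfl
    have := key (1/2) (by norm_num) (by norm_num)
    linarith
  · push_neg at hd
    apply le_of_forall_pos_le_add
    intro ε hε
    have hEd : 0 < E - D := by linarith
    set t := min 1 (ε / (E - D)) with ht
    have ht0 : 0 < t := lt_min one_pos (div_pos hε hEd)
    have ht1 : t ≤ 1 := min_le_left _ _
    have := key t ht0 ht1
    have htd : t * (E - D) ≤ ε := by
      have h2 : t ≤ ε / (E - D) := min_le_right _ _
      calc t * (E - D) ≤ (ε / (E - D)) * (E - D) :=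
            mul_le_mul_of_nonneg_right h2 (le_of_lt hEd)
        _ = ε := by field_simp
    nlinarith

lemma JT_le_pairing_on_T' {T : Set (X × StrongDual ℝ X)}
    {h : X × StrongDual ℝ X → EReal} (hconv : EConvexOn h)
    (hge : ∀ p, (pairingFn p : EReal) ≤ h p)
    (heq : ∀ p ∈ T, h p = (pairingFn p : EReal))
    {p : X × StrongDual ℝ X} (hp : p ∈ T) :
    JT h p ≤ (pairingFn p : EReal) := by
  apply iSup_le
  intro q
  have hk := key_ineq' hconv hge heq hp q
  by_cases hq : h q = ⊤
  · rw [hq, EReal.sub_top]; exact bot_le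
  · have hcoe : ((h q).toReal : EReal) = h q := EReal.coe_toReal hq (h_ne_bot' hge q)
    rw [← hcoe, ← EReal.coe_sub, EReal.coe_le_coe_iff]
    rw [← hcoe, EReal.coe_le_coe_iff] at hk
    linarith

/-- for `h ∈ H(T)`, the pointwise maximum `ĥ = max (h, J h)` belongs to
`H_a(T)`, i.e. `ĥ ∈ H(T)` and `ĥ ≥ J ĥ`. -/
theorem max_with_JT_mem_Ha [CompleteSpace X]
    (T : Set (X × StrongDual ℝ X)) (hT : MaximalMonotoneOp T)
    (h : X × StrongDual ℝ X → EReal) (hh : h ∈ HT T) :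
    h ⊔ JT h ∈ Ha T := by
  obtain ⟨hconv, hlsc, hge, heq⟩ := hh
  refine ⟨⟨?_, ?_, ?_, ?_⟩, ?_⟩
  · -- convexity of the max
    intro p q a b ha hb hab
    have hJc := JT_convex' hge p q a b ha hb hab
    have hhc := hconv p q a b ha hb hab
    have h1 : (h ⊔ JT h) (a • p + b • q) = h (a • p + b • q) ⊔ JT h (a • p + b • q) := rfl
    rw [h1]
    apply sup_le
    · refine hhc.trans ?_
      gcongr
      · exact le_sup_left
      · exact le_sup_left
    · refine hJc.trans ?_
      gcongr
      · exact le_sup_right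
      · exact le_sup_right
  · exact lsc_max' hlsc (JT_lsc' hge)
  · exact fun p => (hge p).trans le_sup_left
  · intro p hp
    refine le_antisymm (sup_le (le_of_eq (heq p hp))
      (JT_le_pairing_on_T' hconv hge heq hp)) ((hge p).trans le_sup_left)
  · exact le_trans (JT_antitone' (le_sup_left : h ≤ h ⊔ JT h))
      (le_sup_right : JT h ≤ h ⊔ JT h)
end
end

section
/- Let X be a real Banach space and T : X ⇉ X* a maximal monotone operator. If F is a nonempty subfamily of H(T), then the pointwise supremum sup_{h ∈ F} h belongs to H(T). Consequently, σ_T := sup_{h ∈ H(T)} h belongs to H(T) and is the largest element of H(T). -/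
/- Setting: `X` is a real Banach space, `StrongDual ℝ X` its topological dual.
A point-to-set operator `T : X ⇉ X*` is identified with its graph,
a subset of `X × StrongDual ℝ X`.  Extended-real-valued functions
(`ℝ ∪ {+∞}`) are modelled by `EReal`. -/

noncomputable section

variable {X : Type*} [NormedAddCommGroup X] [NormedSpace ℝ X]

lemma sup_mem_HT_aux {X : Type*} [NormedAddCommGroup X] [NormedSpace ℝ X]
    (T : Set (X × StrongDual ℝ X))
    (G : Set (X × StrongDual ℝ X → EReal)) (hGne : G.Nonempty) (hGsub : G ⊆ HT T) :
    (fun p => ⨆ h ∈ G, h p) ∈ HT T := by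
  obtain ⟨h₀, h₀G⟩ := hGne
  refine ⟨?_, ?_, ?_, ?_⟩
  · intro p q a b ha hb hab
    refine iSup₂_le fun h hG => ?_
    calc h (a • p + b • q) ≤ (a : EReal) * h p + (b : EReal) * h q :=
          (hGsub hG).1 p q a b ha hb hab
      _ ≤ (a : EReal) * (⨆ h ∈ G, h p) + (b : EReal) * (⨆ h ∈ G, h q) := by
          gcongr
          · exact le_iSup₂ (f := fun h (_ : h ∈ G) => h p) h hG
          · exact le_iSup₂ (f := fun h (_ : h ∈ G) => h q) h hG
  · exact lowerSemicontinuous_iSup fun h =>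
      lowerSemicontinuous_iSup fun hG => (hGsub hG).2.1
  · intro p
    exact le_trans ((hGsub h₀G).2.2.1 p) (le_iSup₂ (f := fun h (_ : h ∈ G) => h p) h₀ h₀G)
  · intro p hp
    refine le_antisymm (iSup₂_le fun h hG => le_of_eq ((hGsub hG).2.2.2 p hp)) ?_
    exact le_trans (le_of_eq ((hGsub h₀G).2.2.2 p hp).symm)
      (le_iSup₂ (f := fun h (_ : h ∈ G) => h p) h₀ h₀G)

/-- the pointwise supremum of any nonempty subfamily of `H(T)` is in `H(T)`;
consequently `σ_T = sup_{h ∈ H(T)} h` belongs to `H(T)` and is its largest element. -/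
theorem sup_mem_HT [CompleteSpace X]
    (T : Set (X × StrongDual ℝ X)) (hT : MaximalMonotoneOp T)
    (F : Set (X × StrongDual ℝ X → EReal)) (hFne : F.Nonempty) (hFsub : F ⊆ HT T) :
    (fun p => ⨆ h ∈ F, h p) ∈ HT T ∧
      (fun p => ⨆ h ∈ HT T, h p) ∈ HT T ∧
      ∀ h ∈ HT T, h ≤ fun p => ⨆ g ∈ HT T, g p := by
  refine ⟨sup_mem_HT_aux T F hFne hFsub, sup_mem_HT_aux T (HT T) ⟨_, hFsub hFne.choose_spec⟩ subset_rfl, ?_⟩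
  intro h hh p
  exact le_iSup₂ (f := fun g (_ : g ∈ HT T) => g p) h hh
end
end

section
/- Let X be a real Banach space and T : X ⇉ X* a maximal monotone operator. If h ∈ H(T), then J h ∈ H(T); that is, the family H(T) is invariant under the transform J. -/
/- Setting: `X` is a real Banach space, `StrongDual ℝ X` its topological dual.
A point-to-set operator `T : X ⇉ X*` is identified with its graph,
a subset of `X × StrongDual ℝ X`.  Extended-real-valued functions
(`ℝ ∪ {+∞}`) are modelled by `EReal`. -/

noncomputable section

variable {X : Type*} [NormedAddCommGroup X] [NormedSpace ℝ X]

/-- the family `H(T)` is invariant under `J`. -/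
theorem JT_mem_HT [CompleteSpace X]
    (T : Set (X × StrongDual ℝ X)) (hT : MaximalMonotoneOp T)
    (h : X × StrongDual ℝ X → EReal) (hh : h ∈ HT T) :
    JT h ∈ HT T := by
  
  obtain ⟨hconv, hlsc, hgeh, heqT⟩ := hh
  have hnb : ∀ q, h q ≠ ⊥ := by
    intro q hq
    have := hgeh q
    rw [hq, le_bot_iff] at this
    exact EReal.coe_ne_bot _ this
  -- every finite value case helper
  have hcases : ∀ q, h q = ⊤ ∨ ∃ c : ℝ, h q = (c : EReal) := by
    intro q
    rcases eq_or_ne (h q) ⊤ with ht | ht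
    · exact Or.inl ht
    · exact Or.inr ⟨(h q).toReal, (EReal.coe_toReal ht (hnb q)).symm⟩
  -- part 3: pairing ≤ JT h everywhere (uses maximality)
  have hge : ∀ p : X × StrongDual ℝ X, (pairingFn p : EReal) ≤ JT h p := by
    intro p
    by_cases hp : ∀ q ∈ T, 0 ≤ (p.2 - q.2) (p.1 - q.1)
    · have hpT := hT.2 p hp
      have h1 := le_iSup (fun q : X × StrongDual ℝ X =>
        (((q.2 p.1 + p.2 q.1 : ℝ) : EReal) - h q)) p
      rw [heqT p hpT] at h1
      have e : ((p.2 p.1 + p.2 p.1 : ℝ) : EReal) - ((pairingFn p : ℝ) : EReal)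
          = ((pairingFn p : ℝ) : EReal) := by
        rw [← EReal.coe_sub]
        norm_cast
        simp [pairingFn]
      rw [e] at h1
      exact h1
    · push_neg at hp
      obtain ⟨q, hqT, hq⟩ := hp
      have h1 := le_iSup (fun r : X × StrongDual ℝ X =>
        (((r.2 p.1 + p.2 r.1 : ℝ) : EReal) - h r)) q
      rw [heqT q hqT] at h1
      refine le_trans ?_ h1
      rw [← EReal.coe_sub, EReal.coe_le_coe_iff]
      have hexp : (p.2 - q.2) (p.1 - q.1)
          = p.2 p.1 - p.2 q.1 - q.2 p.1 + q.2 q.1 := by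
        simp [ContinuousLinearMap.sub_apply, map_sub]; ring
      rw [hexp] at hq
      simp only [pairingFn]
      linarith
  -- part 4: JT h ≤ pairing on T
  have hle : ∀ p ∈ T, JT h p ≤ (pairingFn p : EReal) := by
    intro p hpT
    refine iSup_le fun q => ?_
    rcases hcases q with htop | ⟨hq, hhq⟩
    · rw [htop]
      simp [sub_eq_add_neg]
    · rw [hhq, ← EReal.coe_sub, EReal.coe_le_coe_iff]
      have step : ∀ t : ℝ, 0 < t → t ≤ 1 →
          q.2 p.1 + p.2 q.1 - p.2 p.1 ≤
            hq + t * (q.2 p.1 + p.2 q.1 - p.2 p.1 - q.2 q.1) := by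
        intro t ht ht1
        have conv := hconv p q (1 - t) t (by linarith) ht.le (by ring)
        rw [heqT p hpT, hhq] at conv
        have pairle := hgeh ((1 - t) • p + t • q)
        have chain : ((pairingFn ((1 - t) • p + t • q) : ℝ) : EReal)
            ≤ (((1 - t) * pairingFn p + t * hq : ℝ) : EReal) := by
          refine le_trans pairle (le_trans conv ?_)
          rw [EReal.coe_add, EReal.coe_mul, EReal.coe_mul]
        rw [EReal.coe_le_coe_iff] at chain
        have hpair : pairingFn ((1 - t) • p + t • q)
            = (1 - t) * ((1 - t) * p.2 p.1 + t * p.2 q.1)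
              + t * ((1 - t) * q.2 p.1 + t * q.2 q.1) := by
          simp [pairingFn, Prod.smul_fst, Prod.smul_snd, map_add, map_smul,
            ContinuousLinearMap.add_apply, ContinuousLinearMap.smul_apply, smul_eq_mul]
          ring
        rw [hpair] at chain
        simp only [pairingFn] at chain
        have h2 : t * (q.2 p.1 + p.2 q.1 - p.2 p.1)
            ≤ t * (hq + t * (q.2 p.1 + p.2 q.1 - p.2 p.1 - q.2 q.1)) := by
          nlinarith [chain]
        exact le_of_mul_le_mul_left h2 ht
      have key : q.2 p.1 + p.2 q.1 - p.2 p.1 ≤ hq := by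
        set c : ℝ := q.2 p.1 + p.2 q.1 - p.2 p.1 - q.2 q.1 with hc
        refine le_of_forall_pos_le_add fun ε hε => ?_
        set t : ℝ := min 1 (ε / (|c| + 1)) with htdef
        have habs : (0:ℝ) < |c| + 1 := by positivity
        have ht : 0 < t := lt_min one_pos (div_pos hε habs)
        have ht1 : t ≤ 1 := min_le_left _ _
        have hst := step t ht ht1
        have h1 : t * c ≤ t * |c| := mul_le_mul_of_nonneg_left (le_abs_self c) ht.le
        have h2 : t * |c| ≤ (ε / (|c| + 1)) * (|c| + 1) :=
          mul_le_mul (min_le_right _ _) (by linarith [abs_nonneg c]) (abs_nonneg c)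
            (le_of_lt (div_pos hε habs))
        have h3 : (ε / (|c| + 1)) * (|c| + 1) = ε := div_mul_cancel₀ ε (ne_of_gt habs)
        linarith
      simp only [pairingFn]
      linarith [key]
  refine ⟨?_, ?_, hge, fun p hpT => le_antisymm (hle p hpT) (hge p)⟩
  · -- convexity
    intro p q a b ha hb hab
    refine iSup_le fun r => ?_
    have hLlin : r.2 (a • p + b • q).1 + (a • p + b • q).2 r.1
        = a * (r.2 p.1 + p.2 r.1) + b * (r.2 q.1 + q.2 r.1) := by
      simp [Prod.smul_fst, Prod.smul_snd, map_add, map_smul,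
        ContinuousLinearMap.add_apply, ContinuousLinearMap.smul_apply, smul_eq_mul]
      ring
    rcases hcases r with htop | ⟨hr, hhr⟩
    · rw [htop]
      simp only [sub_eq_add_neg, EReal.neg_top, EReal.add_bot]
      exact bot_le
    · have t1 : ((r.2 p.1 + p.2 r.1 - hr : ℝ) : EReal) ≤ JT h p := by
        have := le_iSup (fun s : X × StrongDual ℝ X =>
          (((s.2 p.1 + p.2 s.1 : ℝ) : EReal) - h s)) r
        rw [hhr] at this
        rw [EReal.coe_sub]
        exact this
      have t2 : ((r.2 q.1 + q.2 r.1 - hr : ℝ) : EReal) ≤ JT h q := by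
        have := le_iSup (fun s : X × StrongDual ℝ X =>
          (((s.2 q.1 + q.2 s.1 : ℝ) : EReal) - h s)) r
        rw [hhr] at this
        rw [EReal.coe_sub]
        exact this
      calc ((r.2 (a • p + b • q).1 + (a • p + b • q).2 r.1 : ℝ) : EReal) - h r
          = ((a * (r.2 p.1 + p.2 r.1 - hr) + b * (r.2 q.1 + q.2 r.1 - hr) : ℝ) : EReal) := by
            rw [hhr, ← EReal.coe_sub]
            norm_cast
            rw [hLlin]
            linear_combination hr * hab
        _ = (a : EReal) * ((r.2 p.1 + p.2 r.1 - hr : ℝ) : EReal)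
            + (b : EReal) * ((r.2 q.1 + q.2 r.1 - hr : ℝ) : EReal) := by
            norm_cast
        _ ≤ (a : EReal) * JT h p + (b : EReal) * JT h q :=
            add_le_add (mul_le_mul_of_nonneg_left t1 (by exact_mod_cast ha))
              (mul_le_mul_of_nonneg_left t2 (by exact_mod_cast hb))
  · -- lower semicontinuity
    have : ∀ r : X × StrongDual ℝ X, Continuous
        (fun p : X × StrongDual ℝ X => ((r.2 p.1 + p.2 r.1 : ℝ) : EReal) - h r) := by
      intro r
      have hc : Continuous (fun p : X × StrongDual ℝ X => (r.2 p.1 + p.2 r.1 : ℝ)) :=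
        (r.2.continuous.comp continuous_fst).add
          ((ContinuousLinearMap.apply ℝ ℝ r.1).continuous.comp continuous_snd)
      rcases hcases r with htop | ⟨cr, hcr⟩
      · rw [htop]
        simpa [sub_eq_add_neg] using continuous_const (y := (⊥ : EReal))
      · rw [hcr]
        exact (continuous_coe_real_ereal.comp (hc.sub continuous_const)).congr
          fun p => EReal.coe_sub _ _
    exact lowerSemicontinuous_iSup fun r => (this r).lowerSemicontinuous
end
end

section
/- Let X be a real Banach space, T : X ⇉ X* a maximal monotone operator, and h ∈ H(T). Then for every (x,x*) ∈ X × X*, h(x,x*) = ⟨x,x*⟩ if and only if (x,x*) ∈ T. Hence every element of H(T) fully characterizes T. -/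
/- Setting: `X` is a real Banach space, `NormedSpace.Dual ℝ X` its topological dual.
A point-to-set operator `T : X ⇉ X*` is identified with its graph,
a subset of `X × NormedSpace.Dual ℝ X`.  Extended-real-valued functions
(`ℝ ∪ {+∞}`) are modelled by `EReal`. -/

noncomputable section

variable {X : Type*} [NormedAddCommGroup X] [NormedSpace ℝ X]

/-- any `h ∈ H(T)` fully characterizes `T`:
`h (x, x*) = ⟨x, x*⟩` iff `(x, x*) ∈ T`. -/
theorem mem_T_iff_eq_pairing [CompleteSpace X]
    (T : Set (X × StrongDual ℝ X)) (hT : MaximalMonotoneOp T)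
    (h : X × StrongDual ℝ X → EReal) (hh : h ∈ HT T) :
    ∀ p : X × StrongDual ℝ X, h p = (pairingFn p : EReal) ↔ p ∈ T := by
  intro p
  constructor
  · intro hp
    refine hT.2 p ?_
    intro q hq
    have hq' : h q = (pairingFn q : EReal) := hh.2.2.2 q hq
    have hconv := hh.1 p q (1/2) (1/2) (by norm_num) (by norm_num) (by norm_num)
    rw [hp, hq'] at hconv
    have hconv' : h ((1/2 : ℝ) • p + (1/2 : ℝ) • q)
        ≤ ((1/2 * pairingFn p + 1/2 * pairingFn q : ℝ) : EReal) := by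
      refine hconv.trans_eq ?_
      rw [← EReal.coe_mul, ← EReal.coe_mul, ← EReal.coe_add]
    have hlow := hh.2.2.1 ((1/2 : ℝ) • p + (1/2 : ℝ) • q)
    have hreal : pairingFn ((1/2 : ℝ) • p + (1/2 : ℝ) • q)
        ≤ 1/2 * pairingFn p + 1/2 * pairingFn q :=
      EReal.coe_le_coe_iff.mp (hlow.trans hconv')
    have hmid : pairingFn ((1/2 : ℝ) • p + (1/2 : ℝ) • q)
        = (1/2) * ((1/2) * (p.2 p.1) + (1/2) * (p.2 q.1))
          + (1/2) * ((1/2) * (q.2 p.1) + (1/2) * (q.2 q.1)) := by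
      simp [pairingFn, Prod.smul_fst, Prod.smul_snd, Prod.fst_add, Prod.snd_add,
        map_add, map_smul, ContinuousLinearMap.add_apply, ContinuousLinearMap.smul_apply,
        smul_eq_mul]
      ring
    rw [hmid] at hreal
    simp only [ContinuousLinearMap.sub_apply, map_sub]
    simp only [pairingFn] at hreal
    linarith
  · intro hp
    exact hh.2.2.2 p hp
end
end

section
/- Let X be a real Banach space and f : X → ℝ ∪ {+∞} a proper, convex, lower semicontinuous function. Define h_FY : X × X* → ℝ ∪ {+∞} by h_FY(x,x*) := f(x) + f*(x*). Then J h_FY = h_FY, i.e., for all (x,x*) ∈ X × X*, sup_{(y,y*) ∈ X × X*} ( ⟨x,y*⟩ + ⟨y,x*⟩ − f(y) − f*(y*) ) = f(x) + f*(x*). -/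
/- Setting: `X` is a real Banach space, `StrongDual ℝ X` its topological dual.
A point-to-set operator `T : X ⇉ X*` is identified with its graph,
a subset of `X × StrongDual ℝ X`.  Extended-real-valued functions
(`ℝ ∪ {+∞}`) are modelled by `EReal`. -/

noncomputable section

variable {X : Type*} [NormedAddCommGroup X] [NormedSpace ℝ X]

lemma ereal_le_of_forall_real_lt_le {a b : EReal}
    (h : ∀ r : ℝ, (r : EReal) < a → (r : EReal) ≤ b) : a ≤ b := by
  by_contra hab
  push_neg at hab
  obtain ⟨r, hr1, hr2⟩ := EReal.exists_between_coe_real hab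
  exact absurd (h r hr2) (not_le.2 hr1)

lemma sep_lemma (f : X → EReal) (hconv : EConvexOn f) (hlsc : LowerSemicontinuous f)
    (x_p : X) (hxp_t : f x_p ≠ ⊤) (hxp_b : f x_p ≠ ⊥)
    (x0 : X) (r : ℝ) (hr : (r : EReal) < f x0) :
    ∃ (ψ : X →L[ℝ] ℝ) (c u : ℝ), 0 ≤ c ∧ ψ x0 + r * c < u ∧
      ∀ y : X, ∀ t : ℝ, f y ≤ (t : EReal) → u < ψ y + t * c := by
  classical
  set Epi : Set (X × ℝ) := {p | f p.1 ≤ (p.2 : EReal)} with hEpi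
  have hclosed : IsClosed Epi := by
    have h1 : IsClosed {p : X × EReal | f p.1 ≤ p.2} := hlsc.isClosed_epigraph
    have h2 : Epi = (fun p : X × ℝ => (p.1, (p.2 : EReal))) ⁻¹' {p : X × EReal | f p.1 ≤ p.2} :=
      rfl
    rw [h2]
    exact h1.preimage (continuous_fst.prodMk (continuous_coe_real_ereal.comp continuous_snd))
  have hconvex : Convex ℝ Epi := by
    rintro ⟨y1, t1⟩ h1 ⟨y2, t2⟩ h2 a b ha hb hab
    simp only [hEpi, Set.mem_setOf_eq] at h1 h2 ⊢
    have hfst : (a • (y1, t1) + b • (y2, t2) : X × ℝ).1 = a • y1 + b • y2 := rfl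
    have hsnd : (a • (y1, t1) + b • (y2, t2) : X × ℝ).2 = a * t1 + b * t2 := rfl
    rw [hfst, hsnd]
    calc f (a • y1 + b • y2) ≤ (a : EReal) * f y1 + (b : EReal) * f y2 :=
          hconv _ _ a b ha hb hab
      _ ≤ (a : EReal) * (t1 : EReal) + (b : EReal) * (t2 : EReal) := by
          gcongr <;> simp [ha, hb]
      _ = ((a * t1 + b * t2 : ℝ) : EReal) := by
          rw [← EReal.coe_mul, ← EReal.coe_mul, ← EReal.coe_add]
  have hnotmem : (x0, r) ∉ Epi := fun h => absurd h (not_le.2 hr)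
  obtain ⟨φ, u, hu1, hu2⟩ := geometric_hahn_banach_point_closed hconvex hclosed hnotmem
  refine ⟨φ.comp (ContinuousLinearMap.inl ℝ X ℝ), φ (0, 1), u, ?_, ?_, ?_⟩
  · -- 0 ≤ c
    by_contra hc
    push_neg at hc
    set tp := (f x_p).toReal with htp
    set c := φ ((0 : X), (1 : ℝ))
    have key : ∀ t : ℝ, tp ≤ t → u < φ (x_p, 0) + t * c := by
      intro t ht
      have hmem : (x_p, t) ∈ Epi := by
        simp only [hEpi, Set.mem_setOf_eq]
        calc f x_p = ((tp : ℝ) : EReal) := (EReal.coe_toReal hxp_t hxp_b).symm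
          _ ≤ (t : EReal) := EReal.coe_le_coe_iff.2 ht
      have := hu2 _ hmem
      have hdecomp : φ (x_p, t) = φ (x_p, 0) + t * c := by
        have : ((x_p, t) : X × ℝ) = (x_p, (0 : ℝ)) + t • ((0 : X), (1 : ℝ)) := by
          ext <;> simp
        rw [this, map_add, map_smul]
        simp [smul_eq_mul]
        exact Or.inl rfl
      linarith [hdecomp ▸ this]
    have h1 := key (max tp ((u - φ (x_p, 0)) / c + 1)) (le_max_left _ _)
    have h2 : (u - φ (x_p, 0)) / c + 1 ≤ max tp ((u - φ (x_p, 0)) / c + 1) := le_max_right _ _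
    set t := max tp ((u - φ (x_p, 0)) / c + 1)
    have : t * c < u - φ (x_p, 0) := by
      calc t * c ≤ ((u - φ (x_p, 0)) / c + 1) * c :=
            mul_le_mul_of_nonpos_right h2 hc.le
        _ = (u - φ (x_p, 0)) + c := by
            rw [add_mul, div_mul_cancel₀ _ hc.ne, one_mul]
        _ < u - φ (x_p, 0) := by linarith
    linarith
  · -- φ x0 r decomposition
    have hdecomp : φ (x0, r) = φ (x0, 0) + r * φ ((0 : X), (1 : ℝ)) := by
      have : ((x0, r) : X × ℝ) = (x0, (0 : ℝ)) + r • ((0 : X), (1 : ℝ)) := by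
        ext <;> simp
      rw [this, map_add, map_smul]; simp [smul_eq_mul]
    have : φ.comp (ContinuousLinearMap.inl ℝ X ℝ) x0 = φ (x0, 0) := rfl
    rw [this]
    linarith [hdecomp ▸ hu1]
  · intro y t hyt
    have hmem : (y, t) ∈ Epi := hyt
    have := hu2 _ hmem
    have hdecomp : φ (y, t) = φ (y, 0) + t * φ ((0 : X), (1 : ℝ)) := by
      have : ((y, t) : X × ℝ) = (y, (0 : ℝ)) + t • ((0 : X), (1 : ℝ)) := by
        ext <;> simp
      rw [this, map_add, map_smul]; simp [smul_eq_mul]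
    have h2 : φ.comp (ContinuousLinearMap.inl ℝ X ℝ) y = φ (y, 0) := rfl
    rw [h2]
    linarith [hdecomp ▸ this]

lemma minorant_lemma (f : X → EReal) (hconv : EConvexOn f) (hlsc : LowerSemicontinuous f)
    (hproper : ∃ x, f x ≠ ⊤) (hnbot : ∀ x, f x ≠ ⊥)
    (x0 : X) (r : ℝ) (hr : (r : EReal) < f x0) :
    ∃ x' : StrongDual ℝ X, ∀ y : X, ((r + x' (y - x0) : ℝ) : EReal) ≤ f y := by
  classical
  obtain ⟨x_p, hxp⟩ := hproper
  have hxpb := hnbot x_p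
  have hxp_coe : ((f x_p).toReal : EReal) = f x_p := EReal.coe_toReal hxp hxpb
  -- Step 1: an affine minorant of f
  obtain ⟨ψ0, c0, u0, hc0, hA, hB⟩ :=
    sep_lemma f hconv hlsc x_p hxp hxpb x_p ((f x_p).toReal - 1)
      (by rw [← hxp_coe]; exact_mod_cast sub_one_lt _)
  have hc0pos : 0 < c0 := by
    rcases hc0.lt_or_eq with h | h
    · exact h
    · exfalso
      have := hB x_p (f x_p).toReal hxp_coe.ge
      rw [← h] at hA this
      simp only [mul_zero] at hA this
      linarith
  set z : X →L[ℝ] ℝ := (-(c0⁻¹)) • ψ0 with hz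
  set β : ℝ := -(u0 / c0) with hβ
  have haffine : ∀ y : X, ((z y - β : ℝ) : EReal) ≤ f y := by
    intro y
    by_cases hy : f y = ⊤
    · rw [hy]; exact le_top
    · have hyb := hnbot y
      have hy_coe : ((f y).toReal : EReal) = f y := EReal.coe_toReal hy hyb
      have := hB y (f y).toReal hy_coe.ge
      rw [← hy_coe]
      apply EReal.coe_le_coe_iff.2
      have hzval : z y = -(c0⁻¹) * ψ0 y := rfl
      have hcne : c0 ≠ 0 := hc0pos.ne'
      rw [hzval, hβ]
      have e1 : -(c0⁻¹) * ψ0 y - -(u0 / c0) = (u0 - ψ0 y) / c0 := by field_simp; ring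
      rw [e1, div_le_iff₀ hc0pos]
      linarith
  -- Step 2: separate (x0, r) from the epigraph
  obtain ⟨ψ, c, u, hc, h1, h2⟩ := sep_lemma f hconv hlsc x_p hxp hxpb x0 r hr
  rcases hc.lt_or_eq with hcpos | hczero
  · -- c > 0
    refine ⟨(-(c⁻¹)) • ψ, fun y => ?_⟩
    by_cases hy : f y = ⊤
    · rw [hy]; exact le_top
    · have hyb := hnbot y
      have hy_coe : ((f y).toReal : EReal) = f y := EReal.coe_toReal hy hyb
      have h2y := h2 y (f y).toReal hy_coe.ge
      rw [← hy_coe]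
      apply EReal.coe_le_coe_iff.2
      have happ : ((-(c⁻¹)) • ψ) (y - x0) = -(c⁻¹) * (ψ y - ψ x0) := by
        simp [map_sub]; ring
      rw [happ]
      have hcne : c ≠ 0 := hcpos.ne'
      have e1 : r + -(c⁻¹) * (ψ y - ψ x0) = (r * c + ψ x0 - ψ y) / c := by field_simp; ring
      rw [e1, div_le_iff₀ hcpos]
      linarith
  · -- c = 0
    rw [← hczero] at h1 h2
    simp only [mul_zero, add_zero] at h1 h2
    set d : ℝ := u - ψ x0 with hd
    have hdpos : 0 < d := by simp only [hd]; linarith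
    set lam : ℝ := max 0 ((r - z x0 + β) / d) with hlam
    have hlam0 : 0 ≤ lam := le_max_left _ _
    have hlamd : r - z x0 + β ≤ lam * d := by
      have := le_max_right 0 ((r - z x0 + β) / d)
      calc r - z x0 + β = ((r - z x0 + β) / d) * d := by field_simp
        _ ≤ lam * d := mul_le_mul_of_nonneg_right this hdpos.le
    refine ⟨z - lam • ψ, fun y => ?_⟩
    by_cases hy : f y = ⊤
    · rw [hy]; exact le_top
    · have hyb := hnbot y
      have hy_coe : ((f y).toReal : EReal) = f y := EReal.coe_toReal hy hyb
      have h2y : u < ψ y := h2 y (f y).toReal hy_coe.ge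
      have hzy : z y - β ≤ (f y).toReal := by
        have := haffine y
        rw [← hy_coe] at this
        exact EReal.coe_le_coe_iff.1 this
      rw [← hy_coe]
      apply EReal.coe_le_coe_iff.2
      have happ : (z - lam • ψ) (y - x0) = (z y - z x0) - lam * (ψ y - ψ x0) := by
        simp [map_sub, mul_sub]
        ring
      rw [happ]
      nlinarith [mul_le_mul_of_nonneg_left (show d ≤ ψ y - ψ x0 by simp only [hd]; linarith)
        hlam0, hlamd, hzy]

lemma fconj_ne_bot (f : X → EReal) (hproper : ∃ x, f x ≠ ⊤) (hnbot : ∀ x, f x ≠ ⊥)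
    (x' : StrongDual ℝ X) : fconj f x' ≠ ⊥ := by
  obtain ⟨x_p, hxp⟩ := hproper
  have hxp_coe : ((f x_p).toReal : EReal) = f x_p := EReal.coe_toReal hxp (hnbot x_p)
  have h := le_iSup (fun x : X => ((x' x : ℝ) : EReal) - f x) x_p
  have h2 : ((x' x_p - (f x_p).toReal : ℝ) : EReal) ≤ fconj f x' := by
    rw [EReal.coe_sub, hxp_coe]
    exact h
  intro hbot
  rw [hbot] at h2
  exact EReal.coe_ne_bot _ (le_bot_iff.1 h2)

lemma fenchel_young (f : X → EReal) (hproper : ∃ x, f x ≠ ⊤) (hnbot : ∀ x, f x ≠ ⊥)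
    (x : X) (x' : StrongDual ℝ X) :
    ((x' x : ℝ) : EReal) - fconj f x' ≤ f x := by
  have h : ((x' x : ℝ) : EReal) - f x ≤ fconj f x' :=
    le_iSup (fun w : X => ((x' w : ℝ) : EReal) - f w) x
  have h2 : ((x' x : ℝ) : EReal) ≤ fconj f x' + f x :=
    ((EReal.sub_le_iff_le_add (Or.inl (hnbot x))
      (Or.inr (fconj_ne_bot f hproper hnbot x'))).1 h)
  exact (EReal.sub_le_iff_le_add (Or.inl (fconj_ne_bot f hproper hnbot x'))
    (Or.inr (hnbot x))).2 (by rwa [add_comm] at h2)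

lemma fconj_le_of_minorant (f : X → EReal) (x0 : X) (r : ℝ) (x' : StrongDual ℝ X)
    (h : ∀ y : X, ((r + x' (y - x0) : ℝ) : EReal) ≤ f y) :
    fconj f x' ≤ ((x' x0 - r : ℝ) : EReal) := by
  apply iSup_le
  intro w
  calc ((x' w : ℝ) : EReal) - f w ≤ ((x' w : ℝ) : EReal) - ((r + x' (w - x0) : ℝ) : EReal) :=
        EReal.sub_le_sub le_rfl (h w)
    _ = ((x' x0 - r : ℝ) : EReal) := by
        rw [← EReal.coe_sub]
        norm_cast
        rw [map_sub]
        ring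

/-- for `f` proper convex lsc, `h_FY (x, x*) = f x + f* x*` is a fixed point
of `J`. -/
theorem JT_fenchelYoung_eq [CompleteSpace X]
    (f : X → EReal) (hconv : EConvexOn f) (hlsc : LowerSemicontinuous f)
    (hproper : ∃ x, f x ≠ ⊤) (hnbot : ∀ x, f x ≠ ⊥) :
    JT (fun p => f p.1 + fconj f p.2) = fun p => f p.1 + fconj f p.2 := by
  funext p
  obtain ⟨x, x'⟩ := p
  show (⨆ q : X × StrongDual ℝ X,
      (((q.2 x + x' q.1 : ℝ) : EReal) - (f q.1 + fconj f q.2))) = f x + fconj f x'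
  apply le_antisymm
  · -- J h ≤ h
    apply iSup_le
    rintro ⟨y, y'⟩
    by_cases hfy : f y = ⊤
    · show ((y' x + x' y : ℝ) : EReal) - (f y + fconj f y') ≤ _
      rw [hfy, EReal.top_add_of_ne_bot (fconj_ne_bot f hproper hnbot y'), EReal.sub_top]
      exact bot_le
    by_cases hfc : fconj f y' = ⊤
    · show ((y' x + x' y : ℝ) : EReal) - (f y + fconj f y') ≤ _
      rw [hfc, EReal.add_top_of_ne_bot (hnbot y), EReal.sub_top]
      exact bot_le
    · have hfyb := hnbot y
      have hfcb := fconj_ne_bot f hproper hnbot y'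
      set a := (f y).toReal with ha
      set b := (fconj f y').toReal with hb
      have hya : ((a : ℝ) : EReal) = f y := EReal.coe_toReal hfy hfyb
      have hyb2 : ((b : ℝ) : EReal) = fconj f y' := EReal.coe_toReal hfc hfcb
      show ((y' x + x' y : ℝ) : EReal) - (f y + fconj f y') ≤ _
      have hsum : f y + fconj f y' = ((a + b : ℝ) : EReal) := by
        rw [EReal.coe_add, hya, hyb2]
      rw [hsum, ← EReal.coe_sub]
      have key1 : ((y' x - b : ℝ) : EReal) ≤ f x := by
        have h := fenchel_young f hproper hnbot x y'
        rwa [← hyb2, ← EReal.coe_sub] at h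
      have key2 : ((x' y - a : ℝ) : EReal) ≤ fconj f x' := by
        have h := le_iSup (fun w : X => ((x' w : ℝ) : EReal) - f w) y
        rwa [← hya, ← EReal.coe_sub] at h
      calc ((y' x + x' y - (a + b) : ℝ) : EReal)
          = ((y' x - b : ℝ) : EReal) + ((x' y - a : ℝ) : EReal) := by
            rw [← EReal.coe_add]; norm_cast; ring
        _ ≤ f x + fconj f x' := add_le_add key1 key2
  · -- h ≤ J h
    apply ereal_le_of_forall_real_lt_le
    intro zz hz
    have hfcb := fconj_ne_bot f hproper hnbot x'
    obtain ⟨r, s, hrx, hsx, hzrs⟩ :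
        ∃ r s : ℝ, (r : EReal) < f x ∧ (s : EReal) < fconj f x' ∧ zz ≤ r + s := by
      by_cases hfx : f x = ⊤
      · obtain ⟨s0, _, hs0⟩ := EReal.exists_between_coe_real (Ne.bot_lt hfcb)
        exact ⟨zz - s0, s0, by rw [hfx]; exact EReal.coe_lt_top _, hs0, by linarith⟩
      · have hfxb := hnbot x
        have hxcoe : ((f x).toReal : EReal) = f x := EReal.coe_toReal hfx hfxb
        by_cases hfc : fconj f x' = ⊤
        · refine ⟨(f x).toReal - 1, zz - ((f x).toReal - 1), ?_, ?_, by linarith⟩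
          · rw [← hxcoe]; exact_mod_cast sub_one_lt _
          · rw [hfc]; exact EReal.coe_lt_top _
        · have hccoe : ((fconj f x').toReal : EReal) = fconj f x' :=
            EReal.coe_toReal hfc hfcb
          set A := (f x).toReal with hA
          set B := (fconj f x').toReal with hB
          have hzAB : zz < A + B := by
            have he : f x + fconj f x' = ((A + B : ℝ) : EReal) := by
              rw [EReal.coe_add, hxcoe, hccoe]
            rw [he] at hz
            exact_mod_cast hz
          refine ⟨A - (A + B - zz) / 2, B - (A + B - zz) / 2, ?_, ?_, by linarith⟩
          · rw [← hxcoe]; exact_mod_cast by linarith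
          · rw [← hccoe]; exact_mod_cast by linarith
    -- from s < fconj f x' find y
    obtain ⟨y, hy⟩ := lt_iSup_iff.1 hsx
    have hfy : f y ≠ ⊤ := by
      intro h
      rw [h, EReal.sub_top] at hy
      exact absurd hy (by simp)
    have hycoe : ((f y).toReal : EReal) = f y := EReal.coe_toReal hfy (hnbot y)
    set ty := (f y).toReal with hty
    have hy2 : s < x' y - ty := by
      rw [← hycoe, ← EReal.coe_sub] at hy
      exact_mod_cast hy
    -- from r < f x get a minorant y'
    obtain ⟨y', hy'min⟩ := minorant_lemma f hconv hlsc hproper hnbot x r hrx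
    have hfc' : fconj f y' ≤ ((y' x - r : ℝ) : EReal) := fconj_le_of_minorant f x r y' hy'min
    have hbound : f y + fconj f y' ≤ ((ty + (y' x - r) : ℝ) : EReal) := by
      rw [EReal.coe_add]
      exact add_le_add (by rw [← hycoe]) hfc'
    have hterm : ((r + s : ℝ) : EReal) ≤
        ((y' x + x' y : ℝ) : EReal) - (f y + fconj f y') := by
      calc ((r + s : ℝ) : EReal) ≤ ((y' x + x' y : ℝ) : EReal) -
            ((ty + (y' x - r) : ℝ) : EReal) := by
            rw [← EReal.coe_sub]
            apply EReal.coe_le_coe_iff.2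
            linarith
        _ ≤ _ := EReal.sub_le_sub le_rfl hbound
    calc (zz : EReal) ≤ ((r + s : ℝ) : EReal) := EReal.coe_le_coe_iff.2 hzrs
      _ ≤ ((y' x + x' y : ℝ) : EReal) - (f y + fconj f y') := hterm
      _ ≤ _ := le_iSup
          (fun q : X × StrongDual ℝ X =>
            (((q.2 x + x' q.1 : ℝ) : EReal) - (f q.1 + fconj f q.2))) (y, y')
end
end

section
/- Let X be a real Banach space and f : X → ℝ ∪ {+∞} a proper convex function (transportation formula). Suppose ε₁, ε₂ ≥ 0, x₁* ∈ ∂_{ε₁} f(x₁), x₂* ∈ ∂_{ε₂} f(x₂), and p, q ≥ 0 with p + q = 1. Define x̄ := p x₁ + q x₂, x̄* := p x₁* + q x₂*, and ε̄ := p ε₁ + q ε₂ + p q ⟨x₁ − x₂, x₁* − x₂*⟩. Then ε̄ ≥ 0 and x̄* ∈ ∂_{ε̄} f(x̄). -/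
/- Setting: `X` is a real Banach space, `NormedSpace.Dual ℝ X` its topological dual.
A point-to-set operator `T : X ⇉ X*` is identified with its graph,
a subset of `X × NormedSpace.Dual ℝ X`.  Extended-real-valued functions
(`ℝ ∪ {+∞}`) are modelled by `EReal`. -/

noncomputable section

variable {X : Type*} [NormedAddCommGroup X] [NormedSpace ℝ X]

/-- transportation formula: for `f` proper convex, `xᵢ* ∈ ∂_{εᵢ} f (xᵢ)`,
`p, q ≥ 0`, `p + q = 1`, the convex combination `(x̄, x̄*)` lies in `∂_ε̄ f` with
`ε̄ = p ε₁ + q ε₂ + p q ⟨x₁ - x₂, x₁* - x₂*⟩ ≥ 0`. -/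
theorem transportation_formula [CompleteSpace X]
    (f : X → EReal) (hconv : EConvexOn f) (hproper : ∃ x, f x ≠ ⊤) (hnbot : ∀ x, f x ≠ ⊥)
    (ε₁ ε₂ : ℝ) (hε₁ : 0 ≤ ε₁) (hε₂ : 0 ≤ ε₂)
    (x₁ x₂ : X) (x₁' x₂' : StrongDual ℝ X)
    (h₁ : x₁' ∈ epsSubdiff f ε₁ x₁) (h₂ : x₂' ∈ epsSubdiff f ε₂ x₂)
    (p q : ℝ) (hp : 0 ≤ p) (hq : 0 ≤ q) (hpq : p + q = 1) :
    0 ≤ p * ε₁ + q * ε₂ + p * q * ((x₁' - x₂') (x₁ - x₂)) ∧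
      p • x₁' + q • x₂' ∈
        epsSubdiff f (p * ε₁ + q * ε₂ + p * q * ((x₁' - x₂') (x₁ - x₂)))
          (p • x₁ + q • x₂) := by
  
  classical
  obtain ⟨x₀, hx₀⟩ := hproper
  -- finiteness of f x₁ and f x₂
  have hfin : ∀ (x : X) (x' : StrongDual ℝ X) (ε : ℝ),
      x' ∈ epsSubdiff f ε x → f x ≠ ⊤ := by
    intro x x' ε hx htop
    have := hx x₀
    rw [htop, EReal.top_add_coe] at this
    exact hx₀ (top_le_iff.mp this)
  have h1t := hfin x₁ x₁' ε₁ h₁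
  have h2t := hfin x₂ x₂' ε₂ h₂
  set a₁ : ℝ := (f x₁).toReal with ha₁
  set a₂ : ℝ := (f x₂).toReal with ha₂
  have hf₁ : f x₁ = (a₁ : EReal) := (EReal.coe_toReal h1t (hnbot x₁)).symm
  have hf₂ : f x₂ = (a₂ : EReal) := (EReal.coe_toReal h2t (hnbot x₂)).symm
  have h₁' : ∀ y : X, ((a₁ + (x₁' (y - x₁) - ε₁) : ℝ) : EReal) ≤ f y := by
    intro y
    have := h₁ y
    rw [hf₁] at this
    rw [EReal.coe_add]
    exact this
  have h₂' : ∀ y : X, ((a₂ + (x₂' (y - x₂) - ε₂) : ℝ) : EReal) ≤ f y := by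
    intro y
    have := h₂ y
    rw [hf₂] at this
    rw [EReal.coe_add]
    exact this
  -- the real versions at x₂ and x₁
  have hr₁₂ : a₁ + (x₁' (x₂ - x₁) - ε₁) ≤ a₂ := by
    have := h₁' x₂; rw [hf₂] at this; exact_mod_cast this
  have hr₂₁ : a₂ + (x₂' (x₁ - x₂) - ε₂) ≤ a₁ := by
    have := h₂' x₁; rw [hf₁] at this; exact_mod_cast this
  have hq' : q = 1 - p := by linarith
  subst hq'
  have hp1 : p ≤ 1 := by linarith
  have hcε : 0 ≤ p * ε₁ + (1 - p) * ε₂ + p * (1 - p) * ((x₁' - x₂') (x₁ - x₂)) := by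
    simp only [ContinuousLinearMap.sub_apply, map_sub] at hr₁₂ hr₂₁ ⊢
    nlinarith [mul_nonneg hp (sub_nonneg.mpr hp1), sq_nonneg p, sq_nonneg (1 - p),
      mul_nonneg (mul_nonneg hp (sub_nonneg.mpr hp1))
        (show 0 ≤ (x₁' x₁ - x₂' x₁ - (x₁' x₂ - x₂' x₂)) + ε₁ + ε₂ by linarith)]
  refine ⟨hcε, ?_⟩
  intro y
  rcases eq_or_ne (f y) ⊤ with hyt | hyt
  · rw [hyt]; exact le_top
  have hfy : f y = ((f y).toReal : EReal) := (EReal.coe_toReal hyt (hnbot y)).symm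
  set b : ℝ := (f y).toReal
  have hb₁ : a₁ + (x₁' (y - x₁) - ε₁) ≤ b := by
    have := h₁' y; rw [hfy] at this; exact_mod_cast this
  have hb₂ : a₂ + (x₂' (y - x₂) - ε₂) ≤ b := by
    have := h₂' y; rw [hfy] at this; exact_mod_cast this
  have hconv' : f (p • x₁ + (1 - p) • x₂) ≤ ((p * a₁ + (1 - p) * a₂ : ℝ) : EReal) := by
    have := hconv x₁ x₂ p (1 - p) hp hq hpq
    rw [hf₁, hf₂] at this
    calc f (p • x₁ + (1 - p) • x₂) ≤ (p : EReal) * (a₁ : EReal) + ((1 - p) : EReal) * (a₂ : EReal) := this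
      _ = ((p * a₁ + (1 - p) * a₂ : ℝ) : EReal) := by
          norm_cast
  have key : p * a₁ + (1 - p) * a₂ +
      ((p • x₁' + (1 - p) • x₂') (y - (p • x₁ + (1 - p) • x₂)) -
        (p * ε₁ + (1 - p) * ε₂ + p * (1 - p) * ((x₁' - x₂') (x₁ - x₂)))) ≤ b := by
    simp only [ContinuousLinearMap.add_apply, ContinuousLinearMap.smul_apply,
      ContinuousLinearMap.sub_apply, map_sub, map_add, map_smul, smul_eq_mul] at hb₁ hb₂ ⊢
    nlinarith [mul_le_mul_of_nonneg_left hb₁ hp, mul_le_mul_of_nonneg_left hb₂ hq]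
  calc f (p • x₁ + (1 - p) • x₂) +
        (((p • x₁' + (1 - p) • x₂') (y - (p • x₁ + (1 - p) • x₂)) -
          (p * ε₁ + (1 - p) * ε₂ + p * (1 - p) * ((x₁' - x₂') (x₁ - x₂))) : ℝ) : EReal)
      ≤ ((p * a₁ + (1 - p) * a₂ : ℝ) : EReal) +
        (((p • x₁' + (1 - p) • x₂') (y - (p • x₁ + (1 - p) • x₂)) -
          (p * ε₁ + (1 - p) * ε₂ + p * (1 - p) * ((x₁' - x₂') (x₁ - x₂))) : ℝ) : EReal) :=
        add_le_add_left hconv' _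
    _ = ((p * a₁ + (1 - p) * a₂ +
          ((p • x₁' + (1 - p) • x₂') (y - (p • x₁ + (1 - p) • x₂)) -
            (p * ε₁ + (1 - p) * ε₂ + p * (1 - p) * ((x₁' - x₂') (x₁ - x₂)))) : ℝ) : EReal) := by
        rw [← EReal.coe_add]
    _ ≤ ((b : ℝ) : EReal) := EReal.coe_le_coe_iff.mpr key
    _ = f y := hfy.symm
end
end

section
/- Let X be a real Banach space and T : X ⇉ X* a maximal monotone operator. The Fitzpatrick function φ_T, defined by φ_T(x,x*) := sup_{(y,y*) ∈ T} ( ⟨x,y*⟩ + ⟨y,x*⟩ − ⟨y,y*⟩ ), belongs to H(T) and is the smallest element of H(T): for every h ∈ H(T) one has h ≥ φ_T pointwise. -/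
/- Setting: `X` is a real Banach space, `NormedSpace.Dual ℝ X` its topological dual.
A point-to-set operator `T : X ⇉ X*` is identified with its graph,
a subset of `X × NormedSpace.Dual ℝ X`.  Extended-real-valued functions
(`ℝ ∪ {+∞}`) are modelled by `EReal`. -/

noncomputable section

variable {X : Type*} [NormedAddCommGroup X] [NormedSpace ℝ X]

/-- Auxiliary: an `EReal` bound obtained in the limit `ε → 0`. -/
lemma ereal_le_of_forall_sub' (B : ℝ) (e : EReal)
    (h : ∀ ε : ℝ, 0 < ε → ((B - ε : ℝ) : EReal) ≤ e) : (B : EReal) ≤ e := by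
  induction e using EReal.rec with
  | bot => exact absurd (le_bot_iff.1 (h 1 one_pos)) (EReal.coe_ne_bot _)
  | coe r =>
      have : ∀ ε : ℝ, 0 < ε → B - ε ≤ r := fun ε hε => EReal.coe_le_coe_iff.1 (h ε hε)
      exact_mod_cast le_of_forall_sub_le this
  | top => exact le_top

/-- Auxiliary: the integrand of the Fitzpatrick function is affine in `p`. -/
lemma fitz_term_affine (q p p' : X × StrongDual ℝ X) (a b : ℝ) (hab : a + b = 1) :
    (q.2 (a • p + b • p').1 + (a • p + b • p').2 q.1 - q.2 q.1 : ℝ)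
      = a * (q.2 p.1 + p.2 q.1 - q.2 q.1) + b * (q.2 p'.1 + p'.2 q.1 - q.2 q.1) := by
  simp only [Prod.fst_add, Prod.snd_add, Prod.smul_fst, Prod.smul_snd, map_add, map_smul,
    ContinuousLinearMap.add_apply, ContinuousLinearMap.smul_apply, smul_eq_mul]
  linear_combination (q.2 q.1) * hab

/-- Auxiliary: the Fitzpatrick function is convex. -/
lemma fitz_econvex (T : Set (X × StrongDual ℝ X)) : EConvexOn (fitz T) := by
  intro p p' a b ha hb hab
  rcases eq_or_lt_of_le ha with rfl | ha'
  · have hb1 : b = 1 := by linarith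
    subst hb1
    simp [fitz]
  rcases eq_or_lt_of_le hb with rfl | hb'
  · have ha1 : a = 1 := by linarith
    subst ha1
    simp [fitz]
  refine iSup₂_le fun q hq => ?_
  rw [fitz_term_affine q p p' a b hab, EReal.coe_add, EReal.coe_mul, EReal.coe_mul]
  refine add_le_add ?_ ?_
  · exact mul_le_mul_of_nonneg_left (le_iSup₂_of_le q hq le_rfl) (by exact_mod_cast ha)
  · exact mul_le_mul_of_nonneg_left (le_iSup₂_of_le q hq le_rfl) (by exact_mod_cast hb)

/-- Auxiliary: the Fitzpatrick function is lower semicontinuous. -/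
lemma fitz_lsc (T : Set (X × StrongDual ℝ X)) : LowerSemicontinuous (fitz T) := by
  apply lowerSemicontinuous_iSup
  intro q
  apply lowerSemicontinuous_iSup
  intro _
  apply Continuous.lowerSemicontinuous
  apply continuous_coe_real_ereal.comp
  fun_prop

/-- Auxiliary: on the graph `T`, the Fitzpatrick function agrees with the pairing. -/
lemma fitz_eq_on_graph (T : Set (X × StrongDual ℝ X)) (hmono : MonotoneOp T)
    (p : X × StrongDual ℝ X) (hp : p ∈ T) : fitz T p = (pairingFn p : EReal) := by
  apply le_antisymm
  · refine iSup₂_le fun q hq => ?_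
    have h0 := hmono p hp q hq
    simp only [ContinuousLinearMap.sub_apply, map_sub] at h0
    exact EReal.coe_le_coe_iff.2 (by simp [pairingFn]; linarith)
  · refine le_iSup₂_of_le p hp ?_
    exact EReal.coe_le_coe_iff.2 (by simp [pairingFn])

/-- Auxiliary: any member of `H(T)` dominates the Fitzpatrick function. -/
lemma fitz_le_of_HT (T : Set (X × StrongDual ℝ X))
    (h : X × StrongDual ℝ X → EReal)
    (hconv : EConvexOn h)
    (hge : ∀ p : X × StrongDual ℝ X, (pairingFn p : EReal) ≤ h p)
    (heqT : ∀ p ∈ T, h p = (pairingFn p : EReal)) :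
    fitz T ≤ h := by
  intro p
  have hpne : h p ≠ ⊥ := fun hb => by simpa [hb] using hge p
  by_cases hpt : h p = ⊤
  · rw [hpt]; exact le_top
  lift h p to ℝ using ⟨hpt, hpne⟩ with r hr
  refine iSup₂_le fun q hq => ?_
  apply ereal_le_of_forall_sub'
  intro ε hε
  set P := p.2 p.1 with hP
  set Q := q.2 q.1 with hQ
  set S := q.2 p.1 + p.2 q.1 with hS
  set D := S - Q - P with hD
  set a := min 1 (ε / max D 1) with hadef
  have hM : (1:ℝ) ≤ max D 1 := le_max_right _ _
  have ha0 : 0 < a := lt_min one_pos (div_pos hε (by linarith))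
  have ha1 : a ≤ 1 := min_le_left _ _
  have haD : a * D ≤ ε := by
    rcases le_or_gt D 0 with hDn | hDp
    · nlinarith
    · have h1 : a ≤ ε / max D 1 := min_le_right _ _
      have h2 : a * max D 1 ≤ ε := (le_div_iff₀ (by linarith)).1 h1
      nlinarith [le_max_left D 1]
  have hcv := hconv p q a (1 - a) ha0.le (by linarith) (by ring)
  rw [heqT q hq, ← hr] at hcv
  have hchain : ((pairingFn (a • p + (1-a) • q) : ℝ) : EReal)
      ≤ ((a * r + (1-a) * pairingFn q : ℝ) : EReal) := by
    push_cast
    exact (hge _).trans hcv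
  have hre : pairingFn (a • p + (1-a) • q) ≤ a * r + (1-a) * pairingFn q :=
    EReal.coe_le_coe_iff.1 hchain
  have hexp : pairingFn (a • p + (1-a) • q)
      = a^2 * P + a * (1-a) * S + (1-a)^2 * Q := by
    simp only [pairingFn, Prod.fst_add, Prod.snd_add, Prod.smul_fst, Prod.smul_snd,
      map_add, map_smul, ContinuousLinearMap.add_apply, ContinuousLinearMap.smul_apply,
      smul_eq_mul, hP, hQ, hS]
    ring
  have hpq : pairingFn q = Q := rfl
  rw [hexp, hpq] at hre
  have h3 : 0 ≤ a * (r - a * P - (1-a) * (S - Q)) := by nlinarith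
  have h4 : 0 ≤ r - a * P - (1-a) * (S - Q) := by
    by_contra h5
    push_neg at h5
    nlinarith [mul_pos ha0 (neg_pos.2 h5)]
  have hgoal : q.2 p.1 + p.2 q.1 - q.2 q.1 - ε ≤ r := by
    have hBS : q.2 p.1 + p.2 q.1 - q.2 q.1 = S - Q := by rw [hS, hQ]
    rw [hBS]
    nlinarith
  exact_mod_cast hgoal

/-- Auxiliary: the Fitzpatrick function dominates the pairing (uses maximality). -/
lemma pairing_le_fitz (T : Set (X × StrongDual ℝ X)) (hT : MaximalMonotoneOp T)
    (p : X × StrongDual ℝ X) : (pairingFn p : EReal) ≤ fitz T p := by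
  by_cases hp : p ∈ T
  · refine le_iSup₂_of_le p hp ?_
    exact EReal.coe_le_coe_iff.2 (by simp [pairingFn])
  · have hne : ¬ ∀ q ∈ T, 0 ≤ (p.2 - q.2) (p.1 - q.1) := fun hall => hp (hT.2 p hall)
    push_neg at hne
    obtain ⟨q, hq, hlt⟩ := hne
    refine le_iSup₂_of_le q hq ?_
    apply EReal.coe_le_coe_iff.2
    simp only [ContinuousLinearMap.sub_apply, map_sub] at hlt
    simp only [pairingFn]
    linarith



/-- the Fitzpatrick function `φ_T` belongs to `H(T)` and is its smallest
element. -/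
theorem fitz_mem_HT_and_smallest [CompleteSpace X]
    (T : Set (X × StrongDual ℝ X)) (hT : MaximalMonotoneOp T) :
    fitz T ∈ HT T ∧ ∀ h ∈ HT T, fitz T ≤ h := by
  constructor
  · refine ⟨fitz_econvex T, fitz_lsc T, pairing_le_fitz T hT, fitz_eq_on_graph T hT.1⟩
  · intro h hh
    exact fitz_le_of_HT T h hh.1 hh.2.2.1 hh.2.2.2
end
end

section
/- Let X be a real Banach space and T : X ⇉ X* a maximal monotone operator. If ε₁, ε₂ ≥ 0, x₁* ∈ T^{ε₁}(x₁), and x₂* ∈ T^{ε₂}(x₂), then ⟨x₁ − x₂, x₁* − x₂*⟩ ≥ −(√ε₁ + √ε₂)². -/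
/- Setting: `X` is a real Banach space, `StrongDual ℝ X` its topological dual.
A point-to-set operator `T : X ⇉ X*` is identified with its graph,
a subset of `X × StrongDual ℝ X`.  Extended-real-valued functions
(`ℝ ∪ {+∞}`) are modelled by `EReal`. -/

noncomputable section

variable {X : Type*} [NormedAddCommGroup X] [NormedSpace ℝ X]

set_option maxHeartbeats 1000000 in
/-- the weak additivity of the enlargement `T^ε`:
`x₁* ∈ T^{ε₁}(x₁)`, `x₂* ∈ T^{ε₂}(x₂)` imply
`⟨x₁ - x₂, x₁* - x₂*⟩ ≥ -(√ε₁ + √ε₂)²`. -/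
theorem enlargement_weak_additivity [CompleteSpace X]
    (T : Set (X × StrongDual ℝ X)) (hT : MaximalMonotoneOp T)
    (ε₁ ε₂ : ℝ) (hε₁ : 0 ≤ ε₁) (hε₂ : 0 ≤ ε₂)
    (x₁ x₂ : X) (x₁' x₂' : StrongDual ℝ X)
    (h₁ : x₁' ∈ enl T ε₁ x₁) (h₂ : x₂' ∈ enl T ε₂ x₂) :
    -((Real.sqrt ε₁ + Real.sqrt ε₂) ^ 2) ≤ (x₁' - x₂') (x₁ - x₂) := by
  by_contra hcon
  push_neg at hcon
  set a := Real.sqrt ε₁ with ha_def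
  set b := Real.sqrt ε₂ with hb_def
  have ha : 0 ≤ a := Real.sqrt_nonneg _
  have hb : 0 ≤ b := Real.sqrt_nonneg _
  have ha2 : a ^ 2 = ε₁ := Real.sq_sqrt hε₁
  have hb2 : b ^ 2 = ε₂ := Real.sq_sqrt hε₂
  set ρ : ℝ := (x₁' - x₂') (x₁ - x₂) with hρ_def
  set u : ℝ := -ρ with hu_def
  have hgt : (a + b) ^ 2 < u := by
    simp only [hu_def]; linarith
  have hu : 0 < u := lt_of_le_of_lt (sq_nonneg _) hgt
  set t : ℝ := (u + b ^ 2 - a ^ 2) / (2 * u) with ht_def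
  have ht0 : 0 ≤ t := by
    apply div_nonneg _ (by linarith)
    nlinarith [sq_nonneg (a + b), mul_nonneg ha hb]
  have ht1 : t ≤ 1 := by
    rw [div_le_one (by linarith)]
    nlinarith [mul_nonneg ha hb]
  have h2ut : 2 * u * t = u + b ^ 2 - a ^ 2 := by
    rw [ht_def]; field_simp [hu.ne']
  have hft : u * t ^ 2 ≥ b ^ 2 := by
    have key : (u + b ^ 2 - a ^ 2) ^ 2 - 4 * u * b ^ 2
        = (u - (a + b) ^ 2) * (u - (a - b) ^ 2) := by ring
    have h1 : (a - b) ^ 2 ≤ (a + b) ^ 2 := by nlinarith [mul_nonneg ha hb]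
    have h2 : 0 ≤ (u - (a + b) ^ 2) * (u - (a - b) ^ 2) := by
      apply mul_nonneg <;> linarith
    nlinarith [sq_nonneg (2 * u * t)]
  set x : X := t • x₁ + (1 - t) • x₂ with hx_def
  set x' : StrongDual ℝ X := t • x₁' + (1 - t) • x₂' with hx'_def
  have hmem : (x, x') ∈ T := by
    apply hT.2
    intro q hq
    have hA1 : -ε₁ ≤ (x₁' - q.2) (x₁ - q.1) := h₁ q hq
    have hA2 : -ε₂ ≤ (x₂' - q.2) (x₂ - q.1) := h₂ q hq
    have hid : (x' - q.2) (x - q.1)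
        = t * ((x₁' - q.2) (x₁ - q.1)) + (1 - t) * ((x₂' - q.2) (x₂ - q.1))
          - t * (1 - t) * ρ := by
      simp only [hx_def, hx'_def, hρ_def, ContinuousLinearMap.sub_apply,
        ContinuousLinearMap.add_apply, ContinuousLinearMap.smul_apply,
        map_add, map_sub, map_smul, smul_eq_mul]
      ring
    have hferm : t * ε₁ + (1 - t) * ε₂ + t * (1 - t) * ρ ≤ 0 := by
      have : t * ε₁ + (1 - t) * ε₂ + t * (1 - t) * ρ = t * a ^ 2 + (1 - t) * b ^ 2
          - t * (1 - t) * u := by simp only [ha2, hb2, hu_def]; ring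
      rw [this]
      nlinarith [hft, h2ut]
    have hm1 : t * (-ε₁) ≤ t * ((x₁' - q.2) (x₁ - q.1)) :=
      mul_le_mul_of_nonneg_left hA1 ht0
    have hm2 : (1 - t) * (-ε₂) ≤ (1 - t) * ((x₂' - q.2) (x₂ - q.1)) :=
      mul_le_mul_of_nonneg_left hA2 (by linarith)
    rw [hid]
    linarith
  have hc1 : -ε₁ ≤ (x₁' - x') (x₁ - x) := h₁ (x, x') hmem
  have hc2 : -ε₂ ≤ (x₂' - x') (x₂ - x) := h₂ (x, x') hmem
  have he1 : (x₁' - x') (x₁ - x) = (1 - t) ^ 2 * ρ := by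
    simp only [hx_def, hx'_def, hρ_def, ContinuousLinearMap.sub_apply,
      ContinuousLinearMap.add_apply, ContinuousLinearMap.smul_apply,
      map_add, map_sub, map_smul, smul_eq_mul]
    ring
  have he2 : (x₂' - x') (x₂ - x) = t ^ 2 * ρ := by
    simp only [hx_def, hx'_def, hρ_def, ContinuousLinearMap.sub_apply,
      ContinuousLinearMap.add_apply, ContinuousLinearMap.smul_apply,
      map_add, map_sub, map_smul, smul_eq_mul]
    ring
  rw [he1] at hc1
  rw [he2] at hc2
  -- hc1 : (1-t)^2 * u ≤ a^2, hc2 : t^2 * u ≤ b^2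
  have k1 : (1 - t) ^ 2 * u ≤ a ^ 2 := by
    have : (1 - t) ^ 2 * ρ = -((1 - t) ^ 2 * u) := by rw [hu_def]; ring
    rw [this] at hc1; linarith
  have k2 : t ^ 2 * u ≤ b ^ 2 := by
    have : t ^ 2 * ρ = -(t ^ 2 * u) := by rw [hu_def]; ring
    rw [this] at hc2; linarith
  -- derive u ≤ (a+b)^2, contradiction with hgt
  have hxnn : 0 ≤ t * (1 - t) * u :=
    mul_nonneg (mul_nonneg ht0 (by linarith)) hu.le
  have habnn : 0 ≤ a * b := mul_nonneg ha hb
  have hmul : t ^ 2 * u * ((1 - t) ^ 2 * u) ≤ b ^ 2 * a ^ 2 :=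
    mul_le_mul k2 k1 (mul_nonneg (sq_nonneg _) hu.le) (sq_nonneg b)
  have hsq : (t * (1 - t) * u) ^ 2 ≤ (a * b) ^ 2 := by nlinarith [hmul]
  have hab : t * (1 - t) * u ≤ a * b := by nlinarith [hsq, hxnn, habnn]
  have hexp : u = t ^ 2 * u + 2 * (t * (1 - t) * u) + (1 - t) ^ 2 * u := by ring
  have hfin : u ≤ (a + b) ^ 2 := by nlinarith [k1, k2, hab]
  linarith
end
end

section
/- Let X be a real Banach space, T : X ⇉ X* a maximal monotone operator, and h ∈ H(T). Then L(h) is nonempty if and only if h ≥ J h pointwise (i.e., h ∈ H_a(T)). Moreover, L(σ_T) = H_a(T), where σ_T := sup_{h ∈ H(T)} h. -/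
/- Setting: `X` is a real Banach space, `StrongDual ℝ X` its topological dual.
A point-to-set operator `T : X ⇉ X*` is identified with its graph,
a subset of `X × StrongDual ℝ X`.  Extended-real-valued functions
(`ℝ ∪ {+∞}`) are modelled by `EReal`. -/

noncomputable section

variable {X : Type*} [NormedAddCommGroup X] [NormedSpace ℝ X]

/-- for `h ∈ H(T)`, `L(h)` is nonempty iff `h ≥ J h`; moreover
`L(σ_T) = H_a(T)` where `σ_T = sup_{h ∈ H(T)} h`. -/
theorem L_nonempty_iff_and_L_sigma_eq_Ha [CompleteSpace X]
    (T : Set (X × StrongDual ℝ X)) (hT : MaximalMonotoneOp T)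
    (h : X × StrongDual ℝ X → EReal) (hh : h ∈ HT T) :
    ((Lfam T h).Nonempty ↔ JT h ≤ h) ∧
      Lfam T (fun p => ⨆ g ∈ HT T, g p) = Ha T := by
  constructor
  · constructor
    · rintro ⟨g, hg, hgh, hJg⟩
      intro p
      calc JT h p ≤ JT g p := by
            refine iSup_mono fun q => ?_
            exact EReal.sub_le_sub le_rfl (hgh q)
        _ ≤ g p := hJg p
        _ ≤ h p := hgh p
    · intro hJ
      exact ⟨h, hh, le_rfl, hJ⟩
  · ext g
    constructor
    · rintro ⟨hg, _, hJg⟩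
      exact ⟨hg, hJg⟩
    · rintro ⟨hg, hJg⟩
      refine ⟨hg, fun p => ?_, hJg⟩
      exact le_iSup₂ (f := fun (f : X × StrongDual ℝ X → EReal) (_ : f ∈ HT T) => f p) g hg
end
end
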